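/- arXiv:2103.13456 — 8 statements merged into one kernel-verified Lean document; each statement's English description precedes it below -/
import Mathlib

section
/- Let U be a non-empty, proper open subset of the open unit cube (0,1)^n in ℝ^n. Then there exists a countable collection 𝒞 of closed axis-aligned cubes (products of closed intervals of equal length) such that: (1) the union of 𝒞 equals U; (2) distinct cubes in 𝒞 have disjoint interiors; (3) each cube in 𝒞 meets only finitely many other cubes of 𝒞; (4) every neighborhood of the boundary ∂U contains all but finitely many cubes of 𝒞. -/
open Set

/-- dyadic cube of generation `k` with lower corner `m/2^k` -/
def wcube (n k : ℕ) (m : Fin n → ℕ) : Set (Fin n → ℝ) :=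
  Set.pi Set.univ fun i => Set.Icc ((m i : ℝ) / 2 ^ k) (((m i : ℝ) + 1) / 2 ^ k)

variable {n : ℕ}

lemma mem_wcube {k : ℕ} {m : Fin n → ℕ} {x : Fin n → ℝ} :
    x ∈ wcube n k m ↔ ∀ i, (m i : ℝ) / 2 ^ k ≤ x i ∧ x i ≤ ((m i : ℝ) + 1) / 2 ^ k := by
  simp [wcube, Set.mem_pi, Pi.le_def, forall_and]

lemma wcube_subset_parent {k : ℕ} (m : Fin n → ℕ) :
    wcube n (k + 1) m ⊆ wcube n k fun i => m i / 2 := by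
  intro x hx
  rw [mem_wcube] at hx ⊢
  intro i
  obtain ⟨h1, h2⟩ := hx i
  have hc : (0:ℝ) < 2 ^ k := by positivity
  have hA0 : 2 * (m i / 2) ≤ m i := by omega
  have hA : 2 * ((m i / 2 : ℕ) : ℝ) ≤ (m i : ℝ) := by exact_mod_cast hA0
  have hB0 : m i + 1 ≤ 2 * (m i / 2) + 2 := by omega
  have hB : (m i : ℝ) + 1 ≤ 2 * ((m i / 2 : ℕ) : ℝ) + 2 := by exact_mod_cast hB0
  rw [pow_succ] at h1 h2
  constructor
  · refine le_trans ?_ h1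
    rw [div_le_div_iff₀ hc (by positivity)]
    nlinarith
  · refine le_trans h2 ?_
    rw [div_le_div_iff₀ (by positivity) hc]
    nlinarith

lemma wcube_dist {k : ℕ} {m : Fin n → ℕ} {x y : Fin n → ℝ}
    (hx : x ∈ wcube n k m) (hy : y ∈ wcube n k m) : dist x y ≤ (2 ^ k : ℝ)⁻¹ := by
  rw [mem_wcube] at hx hy
  refine dist_pi_le_iff (by positivity) |>.2 fun i => ?_
  obtain ⟨a1, a2⟩ := hx i
  obtain ⟨b1, b2⟩ := hy i
  have hc : (0:ℝ) < 2 ^ k := by positivity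
  have hlen : ((m i : ℝ) + 1) / 2 ^ k - (m i : ℝ) / 2 ^ k = (2 ^ k : ℝ)⁻¹ := by
    field_simp
    ring
  rw [Real.dist_eq, abs_le]
  constructor <;> linarith [hlen]

lemma wcube_compact (k : ℕ) (m : Fin n → ℕ) : IsCompact (wcube n k m) :=
  isCompact_univ_pi fun _ => isCompact_Icc

lemma interior_wcube (k : ℕ) (m : Fin n → ℕ) :
    interior (wcube n k m) =
      Set.pi Set.univ fun i => Set.Ioo ((m i : ℝ) / 2 ^ k) (((m i : ℝ) + 1) / 2 ^ k) := by
  rw [wcube, interior_pi_set Set.finite_univ]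
  simp [interior_Icc]

/-- 1-D nesting: intersecting open dyadic intervals with `j ≤ k` give containment. -/
lemma dyadic_interval_subset {j k a b : ℕ} (hjk : j ≤ k) {t : ℝ}
    (h1 : (a : ℝ) / 2 ^ k < t) (h2 : t < ((a : ℝ) + 1) / 2 ^ k)
    (h3 : (b : ℝ) / 2 ^ j < t) (h4 : t < ((b : ℝ) + 1) / 2 ^ j) :
    Set.Icc ((a : ℝ) / 2 ^ k) (((a : ℝ) + 1) / 2 ^ k) ⊆
      Set.Icc ((b : ℝ) / 2 ^ j) (((b : ℝ) + 1) / 2 ^ j) := by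
  obtain ⟨d, rfl⟩ : ∃ d, k = j + d := ⟨k - j, by omega⟩
  have hj : (0:ℝ) < 2 ^ j := by positivity
  have hk : (0:ℝ) < 2 ^ (j + d) := by positivity
  have hd : (0:ℝ) < 2 ^ d := by positivity
  have hpow : (2:ℝ) ^ (j + d) = 2 ^ j * 2 ^ d := pow_add 2 j d
  have hmul : t * 2 ^ j * 2 ^ d = t * 2 ^ (j + d) := by rw [hpow]; ring
  -- b * 2^d ≤ a
  have e1 : (b : ℝ) * 2 ^ d ≤ a := by
    have hb : (b : ℝ) < t * 2 ^ j := (div_lt_iff₀ hj).1 h3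
    have ha : t * 2 ^ (j + d) < (a : ℝ) + 1 := (lt_div_iff₀ hk).1 h2
    have hb' := mul_lt_mul_of_pos_right hb hd
    have l1 : (b : ℝ) * 2 ^ d < (a : ℝ) + 1 := by linarith
    have l1' : b * 2 ^ d < a + 1 := by exact_mod_cast l1
    have : b * 2 ^ d ≤ a := by omega
    exact_mod_cast this
  have e2 : (a : ℝ) + 1 ≤ ((b : ℝ) + 1) * 2 ^ d := by
    have ha : (a : ℝ) < t * 2 ^ (j + d) := (div_lt_iff₀ hk).1 h1
    have hb : t * 2 ^ j < (b : ℝ) + 1 := (lt_div_iff₀ hj).1 h4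
    have hb' := mul_lt_mul_of_pos_right hb hd
    have l2 : (a : ℝ) < ((b : ℝ) + 1) * 2 ^ d := by linarith
    have l2' : a < (b + 1) * 2 ^ d := by exact_mod_cast l2
    have : a + 1 ≤ (b + 1) * 2 ^ d := l2'
    exact_mod_cast this
  intro s hs
  obtain ⟨s1, s2⟩ := hs
  constructor
  · calc (b : ℝ) / 2 ^ j = (b : ℝ) * 2 ^ d / 2 ^ (j + d) := by rw [hpow]; field_simp
      _ ≤ (a : ℝ) / 2 ^ (j + d) := by gcongr
      _ ≤ s := s1
  · calc s ≤ ((a : ℝ) + 1) / 2 ^ (j + d) := s2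
      _ ≤ ((b : ℝ) + 1) * 2 ^ d / 2 ^ (j + d) := by gcongr
      _ = ((b : ℝ) + 1) / 2 ^ j := by rw [hpow]; field_simp

/-- set-level nesting -/
lemma wcube_nest {j k : ℕ} {a b : Fin n → ℕ} (hjk : j ≤ k)
    (h : (interior (wcube n k a) ∩ interior (wcube n j b)).Nonempty) :
    wcube n k a ⊆ wcube n j b := by
  obtain ⟨t, ht1, ht2⟩ := h
  rw [interior_wcube, Set.mem_univ_pi] at ht1 ht2
  intro x hx
  rw [mem_wcube] at hx ⊢
  intro i
  obtain ⟨u1, u2⟩ := ht1 i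
  obtain ⟨v1, v2⟩ := ht2 i
  exact dyadic_interval_subset hjk u1 u2 v1 v2 ⟨(hx i).1, (hx i).2⟩

lemma wcube_eq_of_inter {k : ℕ} {a b : Fin n → ℕ}
    (h : (interior (wcube n k a) ∩ interior (wcube n k b)).Nonempty) : a = b := by
  obtain ⟨t, ht1, ht2⟩ := h
  rw [interior_wcube, Set.mem_univ_pi] at ht1 ht2
  funext i
  obtain ⟨u1, u2⟩ := ht1 i
  obtain ⟨v1, v2⟩ := ht2 i
  have hk : (0:ℝ) < 2 ^ k := by positivity
  have h1 : (b : Fin n → ℕ) i < a i + 1 := by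
    have : ((b i : ℝ)) < (a i : ℝ) + 1 := by
      have := (div_lt_iff₀ hk).1 v1
      have := (lt_div_iff₀ hk).1 u2
      linarith
    exact_mod_cast this
  have h2 : a i < b i + 1 := by
    have : ((a i : ℝ)) < (b i : ℝ) + 1 := by
      have := (div_lt_iff₀ hk).1 u1
      have := (lt_div_iff₀ hk).1 v2
      linarith
    exact_mod_cast this
  omega

/-- canonical dyadic coordinates of a point -/
noncomputable def wmk (n k : ℕ) (x : Fin n → ℝ) : Fin n → ℕ := fun i => ⌊2 ^ k * x i⌋₊

lemma mem_wmk {k : ℕ} {x : Fin n → ℝ} (hx : ∀ i, 0 ≤ x i) : x ∈ wcube n k (wmk n k x) := by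
  rw [mem_wcube]
  intro i
  have hk : (0:ℝ) < 2 ^ k := by positivity
  have h0 : (0:ℝ) ≤ 2 ^ k * x i := mul_nonneg (by positivity) (hx i)
  constructor
  · rw [div_le_iff₀ hk]
    have := Nat.floor_le h0
    simpa [wmk, mul_comm] using this
  · rw [le_div_iff₀ hk]
    have := Nat.lt_floor_add_one (2 ^ k * x i)
    have : 2 ^ k * x i ≤ (⌊2 ^ k * x i⌋₊ : ℝ) + 1 := le_of_lt this
    simpa [wmk, mul_comm] using this

lemma wmk_zero {x : Fin n → ℝ} (hx : ∀ i, x i < 1) : wmk n 0 x = fun _ => 0 := by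
  funext i
  simp only [wmk, pow_zero, one_mul]
  exact Nat.floor_eq_zero.2 (hx i)

lemma wmk_parent (k : ℕ) (x : Fin n → ℝ) :
    (fun i => wmk n (k + 1) x i / 2) = wmk n k x := by
  funext i
  simp only [wmk]
  have : (2:ℝ) ^ (k+1) * x i / (2:ℕ) = 2 ^ k * x i := by push_cast; ring
  rw [← Nat.floor_div_natCast, this]

lemma wcube_form (k : ℕ) (m : Fin n → ℕ) :
    wcube n k m = Set.pi Set.univ fun i =>
      Set.Icc ((m i : ℝ) / 2 ^ k) ((m i : ℝ) / 2 ^ k + ((2:ℝ) ^ k)⁻¹) := by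
  unfold wcube
  refine Set.pi_congr rfl fun i _ => ?_
  rw [add_div, one_div]

lemma corner_mem_wcube (k : ℕ) (m : Fin n → ℕ) :
    (fun i => (m i : ℝ) / 2 ^ k) ∈ wcube n k m := by
  rw [mem_wcube]
  intro i
  refine ⟨le_rfl, ?_⟩
  gcongr
  linarith

/-- key disjointness auxiliary -/
lemma whitney_disj_aux {U : Set (Fin n → ℝ)} {k k' : ℕ} {m m' : Fin n → ℕ}
    (hkk : k' ≤ k)
    (hpar : ¬ wcube n k (fun i => m i / 2) ⊆ U)
    (hC' : wcube n (k' + 1) m' ⊆ U)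
    (hne : (interior (wcube n (k + 1) m) ∩ interior (wcube n (k' + 1) m')).Nonempty) :
    wcube n (k + 1) m = wcube n (k' + 1) m' := by
  rcases eq_or_lt_of_le hkk with h | h
  · subst h
    rw [wcube_eq_of_inter hne]
  · exfalso
    apply hpar
    refine (wcube_nest (by omega) ?_).trans hC'
    refine hne.mono (Set.inter_subset_inter ?_ le_rfl)
    exact interior_mono (wcube_subset_parent m)

/-- **Whitney Covering Lemma** (version for open subsets of the open unit cube).
If `U` is a non-empty proper open subset of `(0,1)^n ⊆ ℝ^n`, there is a countable collection
`𝒞` of closed axis-aligned cubes (products of closed intervals of equal length) such that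
the union of `𝒞` is `U`, distinct cubes have disjoint interiors, each cube meets only finitely
many other cubes, and every neighborhood of `∂U` contains all but finitely many cubes. -/
theorem whitney_covering (n : ℕ) (U : Set (Fin n → ℝ))
    (hUopen : IsOpen U) (hUne : U.Nonempty)
    (hUsub : U ⊆ Set.pi Set.univ fun _ => Set.Ioo (0:ℝ) 1)
    (hUproper : U ≠ Set.pi Set.univ fun _ => Set.Ioo (0:ℝ) 1) :
    ∃ 𝒞 : Set (Set (Fin n → ℝ)),
      𝒞.Countable ∧
      (∀ C ∈ 𝒞, ∃ (c : Fin n → ℝ) (δ : ℝ), 0 < δ ∧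
        C = Set.pi Set.univ fun i => Set.Icc (c i) (c i + δ)) ∧
      ⋃₀ 𝒞 = U ∧
      (𝒞.Pairwise fun C C' => interior C ∩ interior C' = ∅) ∧
      (∀ C ∈ 𝒞, {C' | C' ∈ 𝒞 ∧ C' ≠ C ∧ (C ∩ C').Nonempty}.Finite) ∧
      (∀ V : Set (Fin n → ℝ), IsOpen V → frontier U ⊆ V →
        {C | C ∈ 𝒞 ∧ ¬ C ⊆ V}.Finite) := by
  classical
  set 𝒞 : Set (Set (Fin n → ℝ)) :=
    {C | ∃ (k : ℕ) (m : Fin n → ℕ), C = wcube n (k + 1) m ∧ wcube n (k + 1) m ⊆ U ∧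
      ¬ wcube n k (fun i => m i / 2) ⊆ U} with h𝒞
  -- basic point facts
  have hx01 : ∀ x ∈ U, ∀ i, 0 < x i ∧ x i < 1 := by
    intro x hx i
    have := hUsub hx
    rw [Set.mem_univ_pi] at this
    exact ⟨(this i).1, (this i).2⟩
  -- the unit cube itself is not inside U
  have key0 : ¬ wcube n 0 (fun _ => 0) ⊆ U := by
    intro h
    apply hUproper
    refine Set.Subset.antisymm hUsub ?_
    intro x hx
    apply h
    rw [mem_wcube]
    intro i
    rw [Set.mem_univ_pi] at hx
    have := hx i
    simp only [Nat.cast_zero, pow_zero, zero_div, zero_add, div_one]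
    exact ⟨le_of_lt this.1, le_of_lt this.2⟩
  -- every cube in 𝒞 is close to the complement of U
  have keyδ : ∀ δ : ℝ, 0 < δ → {C | C ∈ 𝒞 ∧ ∃ x ∈ C, Metric.ball x δ ⊆ U}.Finite := by
    intro δ hδ
    obtain ⟨K, hK⟩ : ∃ K : ℕ, ((2:ℝ) ^ K)⁻¹ < δ := by
      obtain ⟨K, hK⟩ := exists_pow_lt_of_lt_one hδ (by norm_num : (2:ℝ)⁻¹ < 1)
      exact ⟨K, by rwa [inv_pow] at hK⟩
    have hparam : ({p : ℕ × (Fin n → ℕ) | p.1 ≤ K + 1 ∧ ∀ i, p.2 i < 2 ^ (K + 1)}).Finite := by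
      refine Set.Finite.subset (Set.Finite.prod (Set.finite_Iic (K + 1))
        (Set.Finite.pi fun _ : Fin n => Set.finite_Iio (2 ^ (K + 1)))) ?_
      rintro ⟨a, f⟩ ⟨h1, h2⟩
      exact ⟨h1, fun i _ => h2 i⟩
    refine Set.Finite.subset (hparam.image fun p => wcube n p.1 p.2) ?_
    rintro C ⟨⟨k, m, rfl, hCU, hpar⟩, x, hxC, hball⟩
    -- bound on k
    obtain ⟨y, hy, hyU⟩ := Set.not_subset.1 hpar
    have hxp : x ∈ wcube n k (fun i => m i / 2) := wcube_subset_parent m hxC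
    have hd : dist x y ≤ ((2:ℝ) ^ k)⁻¹ := wcube_dist hxp hy
    have hdy : δ ≤ dist y x := by
      by_contra hcon
      exact hyU (hball (by simpa [Metric.mem_ball] using lt_of_not_ge hcon))
    rw [dist_comm] at hdy
    have hkK : ((2:ℝ) ^ K)⁻¹ < ((2:ℝ) ^ k)⁻¹ := lt_of_lt_of_le hK (le_trans hdy hd)
    have hkK' : k < K := by
      by_contra hcon
      have hKk : (2:ℝ) ^ K ≤ 2 ^ k := pow_le_pow_right₀ one_le_two (by omega)
      have : ((2:ℝ) ^ k)⁻¹ ≤ ((2:ℝ) ^ K)⁻¹ := by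
        apply inv_anti₀ (by positivity) hKk
      linarith
    -- bound on m
    have hmb : ∀ i, m i < 2 ^ (K + 1) := by
      intro i
      have hwU : (fun i => (m i : ℝ) / 2 ^ (k + 1)) ∈ U := hCU (corner_mem_wcube (k + 1) m)
      have h1 := (hx01 _ hwU i).2
      have hc : (0:ℝ) < 2 ^ (k + 1) := by positivity
      have : (m i : ℝ) < 2 ^ (k + 1) := by
        rw [div_lt_one hc] at h1; exact h1
      have hm1 : m i < 2 ^ (k + 1) := by exact_mod_cast this
      calc m i < 2 ^ (k + 1) := hm1
        _ ≤ 2 ^ (K + 1) := Nat.pow_le_pow_right (by norm_num) (by omega)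
    exact ⟨(k + 1, m), ⟨by omega, hmb⟩, rfl⟩
  refine ⟨𝒞, ?_, ?_, ?_, ?_, ?_, ?_⟩
  · -- countable
    refine Set.Countable.mono ?_ (Set.countable_range fun p : ℕ × (Fin n → ℕ) => wcube n p.1 p.2)
    rintro C ⟨k, m, rfl, -, -⟩
    exact ⟨(k + 1, m), rfl⟩
  · -- form
    rintro C ⟨k, m, rfl, -, -⟩
    exact ⟨fun i => (m i : ℝ) / 2 ^ (k + 1), ((2:ℝ) ^ (k + 1))⁻¹, by positivity,
      wcube_form (k + 1) m⟩
  · -- union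
    apply Set.Subset.antisymm
    · rintro x ⟨C, ⟨k, m, rfl, hCU, -⟩, hxC⟩
      exact hCU hxC
    · intro x hx
      have hx0 : ∀ i, 0 ≤ x i := fun i => le_of_lt (hx01 x hx i).1
      have hx1 : ∀ i, x i < 1 := fun i => (hx01 x hx i).2
      have hSne : ∃ k : ℕ, wcube n k (wmk n k x) ⊆ U := by
        obtain ⟨ε, hε, hball⟩ := Metric.isOpen_iff.1 hUopen x hx
        obtain ⟨K, hK⟩ : ∃ K : ℕ, ((2:ℝ) ^ K)⁻¹ < ε := by
          obtain ⟨K, hK⟩ := exists_pow_lt_of_lt_one hε (by norm_num : (2:ℝ)⁻¹ < 1)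
          exact ⟨K, by rwa [inv_pow] at hK⟩
        refine ⟨K, fun y hy => hball ?_⟩
        rw [Metric.mem_ball]
        exact lt_of_le_of_lt (wcube_dist hy (mem_wmk hx0)) hK
      have h0 : ¬ wcube n 0 (wmk n 0 x) ⊆ U := by
        rw [wmk_zero hx1]; exact key0
      set k₀ := Nat.find hSne with hk₀
      have hk₀spec : wcube n k₀ (wmk n k₀ x) ⊆ U := Nat.find_spec hSne
      have hk₀ne : k₀ ≠ 0 := by
        intro h; rw [h] at hk₀spec; exact h0 hk₀spec
      obtain ⟨k', hk'⟩ : ∃ k', k₀ = k' + 1 := ⟨k₀ - 1, by omega⟩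
      refine ⟨wcube n (k' + 1) (wmk n (k' + 1) x), ⟨k', wmk n (k' + 1) x, rfl, ?_, ?_⟩,
        mem_wmk hx0⟩
      · rw [← hk']; exact hk₀spec
      · rw [wmk_parent k' x]
        exact Nat.find_min hSne (by omega)
  · -- pairwise disjoint interiors
    rintro C ⟨k, m, rfl, hCU, hpar⟩ C' ⟨k', m', rfl, hCU', hpar'⟩ hne
    by_contra hcon
    have hint : (interior (wcube n (k + 1) m) ∩ interior (wcube n (k' + 1) m')).Nonempty :=
      Set.nonempty_iff_ne_empty.2 hcon
    rcases le_total k' k with h | h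
    · exact hne (whitney_disj_aux h hpar hCU' hint)
    · exact hne (whitney_disj_aux h hpar' hCU (by rwa [Set.inter_comm] at hint)).symm
  · -- local finiteness
    rintro C hC
    obtain ⟨k, m, rfl, hCU, hpar⟩ := hC
    obtain ⟨δ, hδ, hth⟩ := (wcube_compact (k + 1) m).exists_thickening_subset_open hUopen hCU
    refine Set.Finite.subset (keyδ δ hδ) ?_
    rintro C' ⟨hC', -, x, hx1, hx2⟩
    refine ⟨hC', x, hx2, ?_⟩
    refine le_trans ?_ hth
    intro y hy
    rw [Metric.mem_thickening_iff]
    exact ⟨x, hx1, Metric.mem_ball.1 hy⟩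
  · -- all but finitely many cubes near the boundary
    intro V hV hfr
    set F := closure U \ V with hF
    have hFcompact : IsCompact F := by
      refine (isCompact_univ_pi fun _ : Fin n =>
          isCompact_Icc (a := (0:ℝ)) (b := 1)).of_isClosed_subset
        (isClosed_closure.sdiff hV) (Set.diff_subset.trans ?_)
      refine closure_minimal (hUsub.trans ?_) ?_
      · exact Set.pi_mono fun i _ => Set.Ioo_subset_Icc_self
      · exact isClosed_set_pi fun i _ => isClosed_Icc
    have hFU : F ⊆ U := by
      intro x hx
      obtain ⟨hx1, hx2⟩ := hx
      rw [closure_eq_self_union_frontier] at hx1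
      rcases hx1 with h | h
      · exact h
      · exact absurd (hfr h) hx2
    obtain ⟨δ, hδ, hth⟩ := hFcompact.exists_thickening_subset_open hUopen hFU
    refine Set.Finite.subset (keyδ δ hδ) ?_
    rintro C ⟨hC, hCV⟩
    obtain ⟨x, hxC, hxV⟩ := Set.not_subset.1 hCV
    have hCmem := hC
    obtain ⟨k, m, hCeq, hCU, -⟩ := hCmem
    have hxF : x ∈ F := ⟨subset_closure (hCU (hCeq ▸ hxC)), hxV⟩
    refine ⟨hC, x, hxC, ?_⟩
    refine le_trans ?_ hth
    intro y hy
    rw [Metric.mem_thickening_iff]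
    exact ⟨x, hxF, Metric.mem_ball.1 hy⟩
end

section
/- A topological space X is sequentially 0-connected at a point x (i.e., every sequence of based maps S⁰ → X converging to x is sequentially null-homotopic rel basepoint) if and only if for every sequence {x_k} in X converging to x there exists a continuous path α : [0,1] → X with α(0) = x and α(1/k) = x_k for all k ∈ ℕ. -/
open Set unitInterval

/-- A countable family of maps clusters at (converges toward) a point. -/
def ClustersAt {K Z X : Type*} [TopologicalSpace Z] [TopologicalSpace X]
    (f : K → C(Z, X)) (x : X) : Prop :=
  ∀ U ∈ nhds x, {k : K | ¬ Set.range (f k) ⊆ U}.Finite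

/-- The point `1/(k+1)` of the unit interval. -/
noncomputable def invPt (k : ℕ) : I :=
  ⟨1 / (k + 1 : ℝ), by
    constructor
    · positivity
    · rw [div_le_one (by positivity)]
      have : (0:ℝ) ≤ (k : ℝ) := Nat.cast_nonneg k
      linarith⟩

noncomputable def qMap (k : ℕ) (t : I) : I :=
  ⟨(1 - (t:ℝ)) * (1/((k:ℝ)+1)), by
    have h1 : (0:ℝ) ≤ (t:ℝ) := t.2.1
    have h2 : (t:ℝ) ≤ 1 := t.2.2
    have h3 : (0:ℝ) ≤ 1/((k:ℝ)+1) := by positivity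
    have h4 : 1/((k:ℝ)+1) ≤ 1 := by
      rw [div_le_one (by positivity)]
      linarith [Nat.cast_nonneg (α := ℝ) k]
    constructor
    · nlinarith
    · nlinarith⟩

lemma qMap_continuous (k : ℕ) : Continuous (qMap k) := by
  apply Continuous.subtype_mk
  fun_prop

lemma qMap_zero (k : ℕ) : qMap k 0 = invPt k := by
  apply Subtype.ext
  show (1 - ((0:I):ℝ)) * (1/((k:ℝ)+1)) = 1/((k:ℝ)+1)
  norm_num

lemma qMap_one (k : ℕ) : qMap k 1 = 0 := by
  apply Subtype.ext
  show (1 - ((1:I):ℝ)) * (1/((k:ℝ)+1)) = 0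
  norm_num


noncomputable def pieceAux {X : Type*} [TopologicalSpace X] (γ : ℕ → C(I, X)) (k : ℕ) (r : ℝ) : X :=
  if r ≤ 1/2 then γ (k+1) (Set.projIcc 0 1 zero_le_one (2*r))
  else γ k (Set.projIcc 0 1 zero_le_one (2 - 2*r))

lemma pieceAux_continuous {X : Type*} [TopologicalSpace X] (γ : ℕ → C(I, X)) (k : ℕ)
    (h : γ (k+1) 1 = γ k 1) : Continuous (pieceAux γ k) := by
  unfold pieceAux
  apply Continuous.if_le
  · exact (γ (k+1)).continuous.comp (continuous_projIcc.comp (by fun_prop))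
  · exact (γ k).continuous.comp (continuous_projIcc.comp (by fun_prop))
  · exact continuous_id
  · exact continuous_const
  · intro r hr
    subst hr
    have h1 : (2 : ℝ) * (1/2) = 1 := by norm_num
    rw [h1]
    have h2 : (2 : ℝ) - 1 = 1 := by norm_num
    rw [h2, Set.projIcc_right]
    have : (⟨1, right_mem_Icc.2 zero_le_one⟩ : I) = 1 := rfl
    rw [this, h]

lemma pieceAux_of_nonpos {X : Type*} [TopologicalSpace X] (γ : ℕ → C(I, X)) (k : ℕ)
    {r : ℝ} (hr : r ≤ 0) : pieceAux γ k r = γ (k+1) 0 := by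
  rw [pieceAux, if_pos (by linarith)]
  congr 1
  rw [Set.projIcc_of_le_left _ (by linarith)]
  rfl

lemma pieceAux_of_one_le {X : Type*} [TopologicalSpace X] (γ : ℕ → C(I, X)) (k : ℕ)
    {r : ℝ} (hr : 1 ≤ r) : pieceAux γ k r = γ k 0 := by
  rw [pieceAux, if_neg (by linarith)]
  congr 1
  rw [Set.projIcc_of_le_left _ (by linarith)]
  rfl

lemma pieceAux_mem {X : Type*} [TopologicalSpace X] (γ : ℕ → C(I, X)) (k : ℕ) (r : ℝ) :
    pieceAux γ k r ∈ Set.range (γ (k+1)) ∪ Set.range (γ k) := by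
  rw [pieceAux]
  split
  · exact Or.inl (Set.mem_range_self _)
  · exact Or.inr (Set.mem_range_self _)

noncomputable def GAux {X : Type*} [TopologicalSpace X] (γ : ℕ → C(I, X)) (m : ℕ) (s : ℝ) : X :=
  pieceAux γ (m-1) ((s - 1/((m:ℝ)+1)) * ((m:ℝ)*((m:ℝ)+1)))

noncomputable def gAux {X : Type*} [TopologicalSpace X] (x : X) (γ : ℕ → C(I, X)) (s : ℝ) : X :=
  if s ≤ 0 then x else GAux γ ⌊1/s⌋₊ s

lemma floorAux {m : ℕ} (hm : 1 ≤ m) {s : ℝ} (h1 : 1/((m:ℝ)+1) < s) (h2 : s ≤ 1/(m:ℝ)) :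
    ⌊1/s⌋₊ = m := by
  have hmpos : (0:ℝ) < m := by exact_mod_cast hm
  have hs : 0 < s := lt_trans (by positivity) h1
  rw [Nat.floor_eq_iff (by positivity)]
  constructor
  · have h3 : s * (m:ℝ) ≤ 1 := (le_div_iff₀ hmpos).mp h2
    exact (le_div_iff₀ hs).mpr (by linarith [mul_comm s (m:ℝ)])
  · have h4 : 1 < s * ((m:ℝ)+1) := (div_lt_iff₀ (by positivity)).mp h1
    exact (div_lt_iff₀ hs).mpr (by linarith [mul_comm s ((m:ℝ)+1)])

lemma gAux_eq {X : Type*} [TopologicalSpace X] (x : X) (γ : ℕ → C(I, X)) {m : ℕ} (hm : 1 ≤ m)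
    {s : ℝ} (h1 : 1/((m:ℝ)+1) ≤ s) (h2 : s ≤ 1/(m:ℝ)) :
    gAux x γ s = GAux γ m s := by
  have hmpos : (0:ℝ) < m := by exact_mod_cast hm
  have hs : 0 < s := lt_of_lt_of_le (by positivity) h1
  rw [gAux, if_neg (not_le.mpr hs)]
  rcases eq_or_lt_of_le h1 with he | hlt
  · -- s is the left endpoint 1/(m+1)
    have hfl : ⌊1/s⌋₊ = m + 1 := by
      have : 1/s = (m:ℝ)+1 := by
        rw [← he, one_div_one_div]
      rw [this]
      have : ((m:ℝ)+1) = ((m+1 : ℕ) : ℝ) := by push_cast; ring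
      rw [this, Nat.floor_natCast]
    rw [hfl, GAux, GAux]
    have hr1 : (s - 1/((((m+1:ℕ)):ℝ)+1)) * ((((m+1:ℕ)):ℝ)*((((m+1:ℕ)):ℝ)+1)) = 1 := by
      push_cast
      rw [← he]
      field_simp
      ring
    have hr0 : (s - 1/((m:ℝ)+1)) * ((m:ℝ)*((m:ℝ)+1)) ≤ 0 := by
      rw [← he]
      simp
    rw [pieceAux_of_one_le γ _ (le_of_eq hr1.symm), pieceAux_of_nonpos γ _ hr0]
    rw [show m + 1 - 1 = m - 1 + 1 by omega]
  · rw [floorAux hm hlt h2]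

lemma gAux_endpoint {X : Type*} [TopologicalSpace X] (x : X) (γ : ℕ → C(I, X)) {m : ℕ}
    (hm : 1 ≤ m) : gAux x γ (1/(m:ℝ)) = γ (m-1) 0 := by
  have hmpos : (0:ℝ) < m := by exact_mod_cast hm
  have hle : 1/((m:ℝ)+1) ≤ 1/(m:ℝ) := by
    apply one_div_le_one_div_of_le hmpos; linarith
  rw [gAux_eq x γ hm hle le_rfl, GAux]
  have hr : (1/(m:ℝ) - 1/((m:ℝ)+1)) * ((m:ℝ)*((m:ℝ)+1)) = 1 := by
    field_simp
    ring
  rw [pieceAux_of_one_le γ _ (le_of_eq hr.symm)]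

lemma gAux_continuousOn {X : Type*} [TopologicalSpace X] (x : X) (γ : ℕ → C(I, X))
    (hx : ∀ k, γ k 1 = x)
    (hcl : ∀ U ∈ nhds x, {k : ℕ | ¬ Set.range (γ k) ⊆ U}.Finite) :
    ContinuousOn (gAux x γ) (Set.Icc 0 1) := by
  have hG : ∀ m : ℕ, Continuous (GAux γ m) := by
    intro m
    exact (pieceAux_continuous γ (m-1) (by rw [hx, hx])).comp (by fun_prop)
  intro s₀ hs₀
  rcases eq_or_lt_of_le hs₀.1 with h0 | h0
  · -- s₀ = 0
    have hg0 : gAux x γ s₀ = x := by rw [← h0]; exact if_pos le_rfl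
    rw [ContinuousWithinAt, hg0, Filter.tendsto_def]
    intro U hU
    obtain ⟨N, hN⟩ := (hcl U hU).bddAbove
    apply mem_nhdsWithin.mpr
    refine ⟨Set.Iio (1/((N:ℝ)+2)), isOpen_Iio, ?_, ?_⟩
    · rw [← h0]; simp only [Set.mem_Iio]; positivity
    · rintro s ⟨hslt, hsIcc⟩
      simp only [Set.mem_Iio] at hslt
      by_cases hs : s ≤ 0
      · simp only [Set.mem_preimage, gAux, if_pos hs]
        exact mem_of_mem_nhds hU
      · push_neg at hs
        have hrange : ∀ k : ℕ, N < k → Set.range (γ k) ⊆ U := by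
          intro k hk
          by_contra hc
          exact absurd (hN hc) (by omega)
        have hm2 : N + 2 ≤ ⌊1/s⌋₊ := by
          apply Nat.le_floor
          have h4 : s * ((N:ℝ)+2) < 1 := (lt_div_iff₀ (by positivity)).mp hslt
          push_cast
          exact (le_div_iff₀ hs).mpr (by linarith [mul_comm s ((N:ℝ)+2)])
        simp only [Set.mem_preimage, gAux, if_neg (not_le.mpr hs), GAux]
        rcases pieceAux_mem γ (⌊1/s⌋₊ - 1)
            ((s - 1/((⌊1/s⌋₊:ℝ)+1)) * ((⌊1/s⌋₊:ℝ)*((⌊1/s⌋₊:ℝ)+1))) with hmem | hmem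
        · exact hrange (⌊1/s⌋₊ - 1 + 1) (by omega) hmem
        · exact hrange (⌊1/s⌋₊ - 1) (by omega) hmem
  · -- s₀ > 0
    set m := ⌊1/s₀⌋₊ with hmdef
    have hm1 : 1 ≤ m := Nat.le_floor (by
      rw [Nat.cast_one]
      exact one_le_one_div h0 hs₀.2)
    have hmpos : (0:ℝ) < m := by exact_mod_cast hm1
    have hfl1 : (m:ℝ) ≤ 1/s₀ := Nat.floor_le (by positivity)
    have hfl2 : 1/s₀ < (m:ℝ) + 1 := Nat.lt_floor_add_one _
    have hub : s₀ ≤ 1/(m:ℝ) := by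
      have h3 : (m:ℝ) * s₀ ≤ 1 := (le_div_iff₀ h0).mp hfl1
      exact (le_div_iff₀ hmpos).mpr (by linarith [mul_comm s₀ (m:ℝ)])
    have hlb : 1/((m:ℝ)+1) < s₀ := by
      have h4 : 1 < ((m:ℝ)+1) * s₀ := (div_lt_iff₀ h0).mp hfl2
      exact (div_lt_iff₀ (by positivity)).mpr (by linarith [mul_comm s₀ ((m:ℝ)+1)])
    have hl : ContinuousWithinAt (gAux x γ) (Set.Iic s₀) s₀ := by
      have hev : gAux x γ =ᶠ[nhdsWithin s₀ (Set.Iic s₀)] GAux γ m := by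
        filter_upwards [mem_nhdsWithin_of_mem_nhds (Ioi_mem_nhds hlb),
          self_mem_nhdsWithin] with s hs1 hs2
        exact gAux_eq x γ hm1 (le_of_lt hs1) (le_trans hs2 hub)
      exact ((hG m).continuousAt.continuousWithinAt).congr_of_eventuallyEq hev
        (gAux_eq x γ hm1 (le_of_lt hlb) hub)
    rcases eq_or_lt_of_le hub with heq | hlt
    · -- s₀ = 1/m : boundary point
      rcases eq_or_lt_of_le hm1 with hm1' | hm2
      · -- m = 1, s₀ = 1
        have hs1 : s₀ = 1 := by
          rw [heq, ← hm1']; norm_num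
        exact hl.mono (fun t ht => le_trans ht.2 (le_of_eq hs1.symm))
      · -- m ≥ 2
        set n := m - 1 with hndef
        have hn1 : 1 ≤ n := by omega
        have hcast : (n:ℝ) = (m:ℝ) - 1 := by
          rw [hndef]
          push_cast [Nat.cast_sub (by omega : 1 ≤ m)]
          ring
        have hnpos : (0:ℝ) < n := Nat.cast_pos.mpr (by omega)
        have hs0 : s₀ = 1/((n:ℝ)+1) := by
          rw [heq, hcast]; ring_nf
        have hlt' : s₀ < 1/(n:ℝ) := by
          rw [hs0]
          apply one_div_lt_one_div_of_lt hnpos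
          linarith
        have hr : ContinuousWithinAt (gAux x γ) (Set.Ici s₀) s₀ := by
          have hev' : gAux x γ =ᶠ[nhdsWithin s₀ (Set.Ici s₀)] GAux γ n := by
            filter_upwards [mem_nhdsWithin_of_mem_nhds (Iio_mem_nhds hlt'),
              self_mem_nhdsWithin] with s hs1 hs2
            exact gAux_eq x γ hn1 (le_trans (le_of_eq hs0.symm) hs2) (le_of_lt hs1)
          exact ((hG n).continuousAt.continuousWithinAt).congr_of_eventuallyEq hev'
            (gAux_eq x γ hn1 (le_of_eq hs0.symm) (le_of_lt hlt'))
        exact (hl.union hr).mono (fun t _ => (le_total t s₀).elim Or.inl Or.inr)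
    · -- s₀ < 1/m : interior point
      have hev : gAux x γ =ᶠ[nhds s₀] GAux γ m := by
        filter_upwards [Ioo_mem_nhds hlb hlt] with s hs
        exact gAux_eq x γ hm1 (le_of_lt hs.1) (le_of_lt hs.2)
      exact ((hG m).continuousAt.congr hev.symm).continuousWithinAt


/-- `X` is sequentially 0-connected at `x` (every sequence of based maps `S⁰ → X` converging
to `x` is sequentially null-homotopic rel basepoint, where `S⁰ = Bool` with basepoint `true`)
if and only if for every sequence `x_k → x` there is a path `α` with `α 0 = x` and
`α (1/k) = x_k` for all `k ≥ 1`. -/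
theorem seqZeroConnected_iff_path {X : Type*} [TopologicalSpace X] (x : X) :
    (∀ f : ℕ → C(Bool, X), (∀ k, f k true = x) → ClustersAt f x →
      ∃ H : ℕ → C(Bool × I, X),
        (∀ k b, H k (b, 0) = f k b) ∧ (∀ k b, H k (b, 1) = x) ∧
        (∀ k t, H k (true, t) = x) ∧ ClustersAt H x) ↔
    (∀ u : ℕ → X, Filter.Tendsto u Filter.atTop (nhds x) →
      ∃ α : C(I, X), α 0 = x ∧ ∀ k : ℕ, α (invPt k) = u (k + 1)) := by
  constructor
  · -- forward: sequential 0-connectedness → path property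
    intro h u hu
    obtain ⟨H, hH0, hH1, hHt, hHc⟩ :=
      h (fun k => ⟨fun b => bif b then x else u (k+1), continuous_of_discreteTopology⟩)
        (fun k => rfl) (by
          intro U hU
          have hxU : x ∈ U := mem_of_mem_nhds hU
          obtain ⟨N, hN⟩ := Filter.mem_atTop_sets.mp (hu hU)
          apply Set.Finite.subset (Set.finite_Iio N)
          intro k hk
          simp only [Set.mem_setOf_eq] at hk
          by_contra hkN
          simp only [Set.mem_Iio, not_lt] at hkN
          apply hk
          rintro y ⟨b, rfl⟩
          cases b
          · exact hN (k+1) (by omega)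
          · exact hxU)
    set γ : ℕ → C(I, X) :=
      fun k => ⟨fun t => H k (false, t), (H k).continuous.comp (by fun_prop)⟩ with hγdef
    have hγ0 : ∀ k, γ k 0 = u (k+1) := fun k => hH0 k false
    have hγ1 : ∀ k, γ k 1 = x := fun k => hH1 k false
    have hγcl : ∀ U ∈ nhds x, {k : ℕ | ¬ Set.range (γ k) ⊆ U}.Finite := by
      intro U hU
      apply (hHc U hU).subset
      intro k hk
      simp only [Set.mem_setOf_eq] at hk ⊢
      intro hsub
      apply hk
      rintro y ⟨t, rfl⟩
      exact hsub ⟨(false, t), rfl⟩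
    have hcont := gAux_continuousOn x γ hγ1 hγcl
    refine ⟨⟨fun t => gAux x γ ↑t, hcont.restrict⟩, ?_, ?_⟩
    · show gAux x γ ((0:I):ℝ) = x
      exact if_pos le_rfl
    · intro k
      show gAux x γ ((invPt k : I) : ℝ) = u (k+1)
      have hc : ((invPt k : I):ℝ) = 1/(((k+1:ℕ)):ℝ) := by
        show 1/((k:ℝ)+1) = _
        push_cast
        ring
      rw [hc, gAux_endpoint x γ (by omega : 1 ≤ k+1)]
      rw [show k + 1 - 1 = k from rfl]
      exact hγ0 k
  · -- backward: path property → sequential 0-connectedness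
    intro h f hft hcl
    have hu : Filter.Tendsto (fun k => f (k-1) false) Filter.atTop (nhds x) := by
      intro U hU
      obtain ⟨N, hN⟩ := (hcl U hU).bddAbove
      refine Filter.mem_atTop_sets.mpr ⟨N+2, fun k hk => ?_⟩
      have hsub : Set.range (f (k-1)) ⊆ U := by
        by_contra hc
        have := hN hc
        omega
      exact hsub ⟨false, rfl⟩
    obtain ⟨α, hα0, hαk⟩ := h _ hu
    have hαf : ∀ k, α (invPt k) = f k false := by
      intro k
      rw [hαk k, show k + 1 - 1 = k from rfl]
    have hcont : ∀ k : ℕ,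
        Continuous (fun p : Bool × I => if p.1 = true then x else α (qMap k p.2)) := by
      intro k
      have hclopen : IsClopen {p : Bool × I | p.1 = true} :=
        (isClopen_discrete ({true} : Set Bool)).preimage continuous_fst
      apply Continuous.if
      · intro a ha
        rw [hclopen.frontier_eq] at ha
        exact absurd ha (Set.notMem_empty a)
      · exact continuous_const
      · exact α.continuous.comp ((qMap_continuous k).comp continuous_snd)
    refine ⟨fun k => ⟨_, hcont k⟩, ?_, ?_, ?_, ?_⟩
    · intro k b
      cases b
      · simp only [ContinuousMap.coe_mk, if_neg (by simp : ¬(false = true))]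
        rw [qMap_zero]
        exact hαf k
      · simp only [ContinuousMap.coe_mk, if_pos rfl]
        exact (hft k).symm
    · intro k b
      cases b
      · simp only [ContinuousMap.coe_mk, if_neg (by simp : ¬(false = true))]
        rw [qMap_one]
        exact hα0
      · simp
    · intro k t
      simp
    · intro U hU
      have hpre : α ⁻¹' U ∈ nhds (0:I) :=
        α.continuous.continuousAt.preimage_mem_nhds (by rw [hα0]; exact hU)
      obtain ⟨ε, hε, hball⟩ := Metric.mem_nhds_iff.mp hpre
      obtain ⟨N, hNε⟩ := exists_nat_gt (1/ε)
      apply Set.Finite.subset (Set.finite_Iio (N+1))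
      intro k hk
      simp only [Set.mem_setOf_eq] at hk
      by_contra hkN
      simp only [Set.mem_Iio, not_lt] at hkN
      apply hk
      rintro y ⟨p, rfl⟩
      by_cases hb : p.1 = true
      · simp only [ContinuousMap.coe_mk, if_pos hb]
        exact mem_of_mem_nhds hU
      · simp only [ContinuousMap.coe_mk, if_neg hb]
        apply hball
        rw [Metric.mem_ball, Subtype.dist_eq]
        show |(1 - ((p.2:I):ℝ)) * (1/((k:ℝ)+1)) - ((0:I):ℝ)| < ε
        have h1 : (0:ℝ) ≤ (p.2:ℝ) := p.2.2.1
        have h2 : ((p.2:I):ℝ) ≤ 1 := p.2.2.2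
        have hkpos : (0:ℝ) < (k:ℝ)+1 := by positivity
        have hval0 : (0:ℝ) ≤ (1 - ((p.2:I):ℝ)) * (1/((k:ℝ)+1)) := by
          apply mul_nonneg (by linarith) (by positivity)
        have hvalle : (1 - ((p.2:I):ℝ)) * (1/((k:ℝ)+1)) ≤ 1/((k:ℝ)+1) := by
          nlinarith [one_div_pos.mpr hkpos]
        have hNk : ((N:ℝ)+2) ≤ (k:ℝ)+1 := by
          have : (N+1 : ℕ) ≤ k := hkN
          push_cast
          exact_mod_cast by push_cast; linarith [show ((N:ℝ)+1) ≤ (k:ℝ) from by exact_mod_cast this]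
        have hεN : 1 < ε * (N:ℝ) := by
          rw [div_lt_iff₀ hε] at hNε
          linarith [mul_comm ε (N:ℝ)]
        have hfin : 1/((k:ℝ)+1) < ε := by
          rw [div_lt_iff₀ hkpos]
          have hN0 : (0:ℝ) ≤ (N:ℝ) := Nat.cast_nonneg N
          nlinarith
        rw [abs_of_nonneg (by simpa using hval0)]
        simp only [Icc.coe_zero, sub_zero]
        linarith
end

section
/- If {(X_j, x_j)}_{j∈J} is a family of based spaces, each sequentially n-connected at its basepoint, then the product space ∏_{j∈J} X_j is sequentially n-connected at the point (x_j)_{j∈J}. -/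
open Set unitInterval

/-- `X` is sequentially `n`-connected at `x`: for each `0 ≤ k ≤ n`, every sequence of based
`k`-loops (maps `I^k → X` sending the boundary of the cube, i.e. `S^k → X` based maps, to `x`)
that converges to `x` admits a sequence of based null-homotopies converging to `x`. -/
def SeqNConnectedAt (n : ℕ) (X : Type*) [TopologicalSpace X] (x : X) : Prop :=
  ∀ k ≤ n, ∀ f : ℕ → C((Fin k → I), X),
    (∀ m, ∀ y ∈ Cube.boundary (Fin k), f m y = x) →
    ClustersAt f x →
    ∃ H : ℕ → C((Fin k → I) × I, X),
      (∀ m y, H m (y, 0) = f m y) ∧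
      (∀ m y, H m (y, 1) = x) ∧
      (∀ m t, ∀ y ∈ Cube.boundary (Fin k), H m (y, t) = x) ∧
      ClustersAt H x

/-- A product of based spaces, each sequentially `n`-connected at its basepoint, is
sequentially `n`-connected at the point `(x_j)_{j∈J}`. -/
theorem seqNConnectedAt_pi {J : Type*} (n : ℕ) (X : J → Type*)
    [∀ j, TopologicalSpace (X j)] (x : ∀ j, X j)
    (h : ∀ j, SeqNConnectedAt n (X j) (x j)) :
    SeqNConnectedAt n (∀ j, X j) x := by
  intro k hk f hbd hcl
  have hcomp : ∀ j, ∃ H : ℕ → C((Fin k → I) × I, X j),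
      (∀ m y, H m (y, 0) = (f m y) j) ∧
      (∀ m y, H m (y, 1) = x j) ∧
      (∀ m t, ∀ y ∈ Cube.boundary (Fin k), H m (y, t) = x j) ∧
      ClustersAt H (x j) := by
    intro j
    exact h j k hk (fun m => ⟨fun y => f m y j, (continuous_apply j).comp (f m).continuous⟩)
      (fun m y hy => by simp [hbd m y hy])
      (by
        intro U hU
        have hU' : (fun p : ∀ j, X j => p j) ⁻¹' U ∈ nhds x :=
          (continuous_apply j).continuousAt hU
        refine (hcl _ hU').subset ?_
        intro m hm
        simp only [Set.mem_setOf_eq] at hm ⊢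
        intro hsub
        apply hm
        rintro _ ⟨y, rfl⟩
        exact hsub ⟨y, rfl⟩)
  choose Hc h0 h1 hb hccl using hcomp
  refine ⟨fun m => ⟨fun p j => Hc j m p, continuous_pi fun j => (Hc j m).continuous⟩,
    ?_, ?_, ?_, ?_⟩
  · intro m y; funext j; exact h0 j m y
  · intro m y; funext j; exact h1 j m y
  · intro m t y hy; funext j; exact hb j m t y hy
  · intro U hU
    rw [nhds_pi] at hU
    obtain ⟨Fs, hFs, t, ht, hsub⟩ := Filter.mem_pi.mp hU
    refine (hFs.biUnion (fun j _ => hccl j (t j) (ht j))).subset ?_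
    intro m hm
    simp only [Set.mem_setOf_eq] at hm
    by_contra hm'
    simp only [Set.mem_iUnion, Set.mem_setOf_eq, not_exists, not_not] at hm'
    apply hm
    rintro _ ⟨p, rfl⟩
    apply hsub
    intro j hj
    exact hm' j hj ⟨p, rfl⟩
end

section
/- Let X be a space that is sequentially n-connected at x₀ ∈ X. Then the unreduced cone CX = (X × [0,1]) / (X × {1}) is sequentially n-connected at every point of the arc {(x₀, t) : t ∈ [0,1]} ⊆ CX. -/
open Set unitInterval Topology

set_option linter.unusedSectionVars false
set_option maxHeartbeats 1000000

/-- The relation collapsing `X × {1}`. -/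
def ConeRel (X : Type*) : X × I → X × I → Prop := fun p q => p.2 = 1 ∧ q.2 = 1

/-- The unreduced cone `CX = (X × I) / (X × {1})`, with the quotient topology. -/
def Cone (X : Type*) [TopologicalSpace X] : Type _ := Quot (ConeRel X)

instance (X : Type*) [TopologicalSpace X] : TopologicalSpace (Cone X) :=
  inferInstanceAs (TopologicalSpace (Quot (ConeRel X)))

namespace ConeAux
variable {X : Type*} [TopologicalSpace X]

lemma mk_eq_mk {a b : X × I} :
    Quot.mk (ConeRel X) a = Quot.mk (ConeRel X) b ↔ (a = b ∨ (a.2 = 1 ∧ b.2 = 1)) := by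
  rw [Quot.eq]
  constructor
  · intro h
    induction h with
    | rel x y h => exact Or.inr h
    | refl x => exact Or.inl rfl
    | symm x y _ ih => rcases ih with rfl | ⟨h1, h2⟩; exacts [Or.inl rfl, Or.inr ⟨h2, h1⟩]
    | trans x y z _ _ ih1 ih2 =>
      rcases ih1 with rfl | ⟨h1, h2⟩
      · exact ih2
      · rcases ih2 with rfl | ⟨h3, h4⟩
        exacts [Or.inr ⟨h1, h2⟩, Or.inr ⟨h1, h4⟩]
  · rintro (rfl | h)
    · exact Relation.EqvGen.refl a
    · exact Relation.EqvGen.rel _ _ h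

lemma isQuotientMap_mk : IsQuotientMap (Quot.mk (ConeRel X)) := isQuotientMap_quot_mk

/-- vertical motion towards the apex: `vert u s = u + s(1-u)`. -/
def vert (u s : I) : I :=
  ⟨1 - (1 - s) * (1 - u), by
    constructor
    · nlinarith [u.2.1, u.2.2, s.2.1, s.2.2]
    · nlinarith [u.2.1, u.2.2, s.2.1, s.2.2]⟩

@[simp] lemma coe_vert (u s : I) : (vert u s : ℝ) = 1 - (1 - s) * (1 - u) := rfl

lemma continuous_vert : Continuous fun p : I × I => vert p.1 p.2 := by
  apply Continuous.subtype_mk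
  fun_prop

@[simp] lemma vert_zero (u : I) : vert u 0 = u := by
  ext; simp [coe_vert]

@[simp] lemma vert_one (u : I) : vert u 1 = 1 := by
  ext; simp [coe_vert]

@[simp] lemma vert_one_left (s : I) : vert 1 s = 1 := by
  ext; simp [coe_vert]

lemma le_vert (u s : I) : u ≤ vert u s := by
  rw [← Subtype.coe_le_coe, coe_vert]
  nlinarith [u.2.1, u.2.2, s.2.1, s.2.2]

/-- the contraction of the cone upstairs -/
def contrAux : C((X × I) × I, Cone X) :=
  ⟨fun p => Quot.mk _ (p.1.1, vert p.1.2 p.2),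
    continuous_quot_mk.comp <| ((continuous_fst.comp continuous_fst).prodMk
      (continuous_vert.comp ((continuous_snd.comp continuous_fst).prodMk continuous_snd)))⟩

lemma contrAux_sound : ∀ (a b : X × I), ConeRel X a b →
    (contrAux (X := X)).curry a = (contrAux (X := X)).curry b := by
  rintro a b ⟨ha, hb⟩
  ext s
  simp only [ContinuousMap.curry_apply, contrAux, ContinuousMap.coe_mk]
  show Quot.mk (ConeRel X) (a.1, vert a.2 s) = Quot.mk (ConeRel X) (b.1, vert b.2 s)
  rw [ha, hb]
  exact Quot.sound ⟨by simp, by simp⟩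

/-- the contraction of the cone -/
noncomputable def contr : C(Cone X × I, Cone X) :=
  ⟨fun z => Quot.lift (fun w => (contrAux (X := X)).curry w) contrAux_sound z.1 z.2,
   (ContinuousMap.uncurry
     ⟨Quot.lift (fun w => (contrAux (X := X)).curry w) contrAux_sound,
      isQuotientMap_mk.continuous_iff.mpr (ContinuousMap.curry contrAux).continuous⟩).continuous⟩

@[simp] lemma contr_mk (x : X) (u s : I) :
    contr (Quot.mk (ConeRel X) (x, u), s) = Quot.mk (ConeRel X) (x, vert u s) := rfl

lemma contr_zero (z : Cone X) : contr (z, 0) = z := by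
  induction z using Quot.ind with
  | _ w => rw [show (w : X × I) = (w.1, w.2) from rfl, contr_mk, vert_zero]

lemma contr_one (z : Cone X) (x₀ : X) : contr (z, 1) = Quot.mk (ConeRel X) (x₀, 1) := by
  induction z using Quot.ind with
  | _ w =>
    rw [show (w : X × I) = (w.1, w.2) from rfl, contr_mk, vert_one]
    exact Quot.sound ⟨rfl, rfl⟩

lemma isOpen_image_mk {O : Set (X × I)} (hO : IsOpen O) (hOS : ∀ w ∈ O, w.2 ≠ 1) :
    IsOpen (Quot.mk (ConeRel X) '' O) := by
  rw [← isQuotientMap_mk.isOpen_preimage]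
  have h : Quot.mk (ConeRel X) ⁻¹' (Quot.mk (ConeRel X) '' O) = O := by
    ext w
    constructor
    · rintro ⟨w', hw', heq⟩
      rcases mk_eq_mk.mp heq with rfl | ⟨h1, _⟩
      · exact hw'
      · exact absurd h1 (hOS _ hw')
    · intro hw
      exact ⟨w, hw, rfl⟩
  rwa [h]

lemma upSet_mem_nhds {v : Set I} (hv : IsOpen v) {t : I} (h : Icc t 1 ⊆ v) :
    {t' : I | ∀ v', t' ≤ v' → v' ∈ v} ∈ nhds t := by
  by_cases hB : (vᶜ).Nonempty
  · have hBc : IsCompact ((fun x : I => (x : ℝ)) '' vᶜ) :=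
      (hv.isClosed_compl.isCompact).image continuous_subtype_val
    have hne : ((fun x : I => (x : ℝ)) '' vᶜ).Nonempty := hB.image _
    have hmem := hBc.sSup_mem hne
    set b : ℝ := sSup ((fun x : I => (x : ℝ)) '' vᶜ) with hbdef
    obtain ⟨b', hb', hbeq⟩ := hmem
    have hlt : b < (t : ℝ) := by
      rw [← hbeq]
      have hnle : ¬ t ≤ b' := fun hle => hb' (h ⟨hle, le_one'⟩)
      exact_mod_cast not_le.mp hnle
    have hopen : IsOpen {t' : I | b < (t' : ℝ)} := isOpen_Ioi.preimage continuous_subtype_val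
    refine Filter.mem_of_superset (hopen.mem_nhds hlt) ?_
    intro t' ht' v' hv'
    by_contra hv'n
    have hle : (v' : ℝ) ≤ b := le_csSup hBc.bddAbove ⟨v', hv'n, rfl⟩
    have h2 : (t' : ℝ) ≤ (v' : ℝ) := hv'
    exact absurd hle (not_le.mpr (lt_of_lt_of_le ht' h2))
  · rw [Set.not_nonempty_iff_eq_empty, Set.compl_empty_iff] at hB
    exact Filter.univ_mem' (fun t' v' _ => hB ▸ Set.mem_univ v')

lemma exists_invariant_nhds (x₀ : X) {W : Set (Cone X)}
    (hW : W ∈ nhds (Quot.mk (ConeRel X) (x₀, 1))) :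
    ∃ V ∈ nhds (Quot.mk (ConeRel X) (x₀, 1)), V ⊆ W ∧ ∀ z ∈ V, ∀ s, contr (z, s) ∈ V := by
  obtain ⟨W', hW'sub, hW'open, hW'mem⟩ := mem_nhds_iff.mp hW
  set V₀ : Set (X × I) := Quot.mk (ConeRel X) ⁻¹' W' with hV₀
  have hV₀open : IsOpen V₀ := hW'open.preimage continuous_quot_mk
  have hV₀top : ∀ x : X, (x, (1:I)) ∈ V₀ := fun x => by
    show Quot.mk _ (x, (1:I)) ∈ W'
    rw [show Quot.mk (ConeRel X) (x, (1:I)) = Quot.mk (ConeRel X) (x₀, 1) from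
      Quot.sound ⟨rfl, rfl⟩]
    exact hW'mem
  set Vs : Set (X × I) := {w | ∀ v : I, w.2 ≤ v → (w.1, v) ∈ V₀} with hVs
  have hVsOpen : IsOpen Vs := by
    rw [isOpen_iff_mem_nhds]
    rintro ⟨x, u⟩ hw
    have hsub : {x} ×ˢ Icc u 1 ⊆ V₀ := by
      rintro ⟨x', v⟩ ⟨hx', hv⟩
      rcases hx' with rfl
      exact hw v hv.1
    obtain ⟨uo, vo, huo, hvo, hxo, hIo, hsubo⟩ :=
      generalized_tube_lemma isCompact_singleton (isClosed_Icc.isCompact) hV₀open hsub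
    have h1 : {t' : I | ∀ v', t' ≤ v' → v' ∈ vo} ∈ nhds u :=
      upSet_mem_nhds hvo (fun v hv => hIo hv)
    have h2 : uo ×ˢ {t' : I | ∀ v', t' ≤ v' → v' ∈ vo} ∈ nhds (x, u) :=
      prod_mem_nhds (huo.mem_nhds (hxo rfl)) h1
    refine Filter.mem_of_superset h2 ?_
    rintro ⟨x', u'⟩ ⟨hx', hu'⟩ v hv
    exact hsubo ⟨hx', hu' v hv⟩
  have hVsSat : Quot.mk (ConeRel X) ⁻¹' (Quot.mk (ConeRel X) '' Vs) = Vs := by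
    ext w
    constructor
    · rintro ⟨w', hw', heq⟩
      rcases mk_eq_mk.mp heq with rfl | ⟨_, h2⟩
      · exact hw'
      · intro v hv
        have hv1 : v = 1 := le_antisymm le_one' (h2 ▸ hv)
        rw [hv1]
        exact hV₀top w.1
    · intro hw
      exact ⟨w, hw, rfl⟩
  have hVsImgOpen : IsOpen (Quot.mk (ConeRel X) '' Vs) := by
    rw [← isQuotientMap_mk.isOpen_preimage, hVsSat]
    exact hVsOpen
  refine ⟨Quot.mk _ '' Vs, ?_, ?_, ?_⟩
  · refine hVsImgOpen.mem_nhds ⟨(x₀, 1), ?_, rfl⟩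
    intro v hv
    have hv1 : v = 1 := le_antisymm le_one' hv
    rw [hv1]
    exact hV₀top x₀
  · rintro z ⟨w, hwVs, rfl⟩
    have h := hwVs w.2 le_rfl
    have : Quot.mk (ConeRel X) (w.1, w.2) ∈ W' := h
    simpa using hW'sub this
  · rintro z ⟨w, hwVs, rfl⟩ s
    rw [show (w : X × I) = (w.1, w.2) from rfl, contr_mk]
    exact ⟨(w.1, vert w.2 s), fun v hv => hwVs v (le_trans (le_vert _ _) hv), rfl⟩
/-! ### The generic null-homotopy in the cone -/

noncomputable def halfI : I := ⟨1/2, by norm_num⟩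

noncomputable def midCube (k : ℕ) : Fin k → I := fun _ => halfI

noncomputable def pI : ℝ → I := Set.projIcc 0 1 zero_le_one

lemma continuous_pI : Continuous pI := continuous_projIcc

lemma pI_coe {x : ℝ} (hx : x ∈ Icc (0:ℝ) 1) : (pI x : ℝ) = x := by
  rw [pI, Set.projIcc_of_mem _ hx]

@[simp] lemma pI_val (t : I) : pI (t : ℝ) = t := by
  ext
  exact pI_coe t.2

lemma pI_one : pI 1 = 1 := by
  ext
  rw [pI_coe (by norm_num)]
  norm_num

lemma pI_zero : pI 0 = 0 := by
  ext
  rw [pI_coe (by norm_num)]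
  norm_num

lemma contr_one' (z z' : Cone X) : contr (z, 1) = contr (z', 1) := by
  induction z using Quot.ind with
  | _ w =>
    induction z' using Quot.ind with
    | _ w' =>
      rw [show (w : X × I) = (w.1, w.2) from rfl, show (w' : X × I) = (w'.1, w'.2) from rfl,
        contr_mk, contr_mk, vert_one, vert_one]
      exact Quot.sound ⟨rfl, rfl⟩

lemma dist_midCube_le {k : ℕ} (y : Fin k → I) : dist y (midCube k) ≤ 1/2 := by
  refine (dist_pi_le_iff (by norm_num)).mpr fun i => ?_
  have h1 := (y i).2.1
  have h2 := (y i).2.2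
  rw [Subtype.dist_eq, Real.dist_eq]
  rw [show ((midCube k i : ℝ)) = 1/2 from rfl, abs_le]
  constructor <;> linarith

lemma dist_coord_le {k : ℕ} (y : Fin k → I) (i : Fin k) :
    |(y i : ℝ) - 1/2| ≤ dist y (midCube k) := by
  have := dist_le_pi_dist y (midCube k) i
  rwa [Subtype.dist_eq, Real.dist_eq, show ((midCube k i : ℝ)) = 1/2 from rfl] at this

lemma mem_boundary_of_coord {k : ℕ} {y : Fin k → I} {i : Fin k}
    (h : |(y i : ℝ) - 1/2| = 1/2) : y ∈ Cube.boundary (Fin k) := by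
  refine ⟨i, ?_⟩
  rcases (abs_eq (by norm_num : (0:ℝ) ≤ 1/2)).mp h with h' | h'
  · right; ext; dsimp; linarith
  · left; ext; dsimp; linarith

lemma boundary_dist {k : ℕ} {y : Fin k → I} (hy : y ∈ Cube.boundary (Fin k)) :
    dist y (midCube k) = 1/2 := by
  obtain ⟨i, hi⟩ := hy
  refine le_antisymm (dist_midCube_le y) ?_
  refine le_trans ?_ (dist_le_pi_dist y (midCube k) i)
  rw [Subtype.dist_eq, Real.dist_eq, show ((midCube k i : ℝ)) = 1/2 from rfl]
  rcases hi with h | h <;> rw [h] <;> norm_num <;>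
    rw [abs_of_nonneg (by norm_num : (0:ℝ) ≤ (1:ℝ)/2)]

lemma exists_coord_dist {k : ℕ} {y : Fin k → I} (hy : 0 < dist y (midCube k)) :
    ∃ i, |(y i : ℝ) - 1/2| = dist y (midCube k) := by
  have hne : Nonempty (Fin k) := by
    by_contra h
    have hy' : y = midCube k := funext fun i => absurd ⟨i⟩ h
    rw [hy', dist_self] at hy
    exact lt_irrefl _ hy
  obtain ⟨i, -, hi⟩ := Finset.exists_mem_eq_sup Finset.univ Finset.univ_nonempty
    (fun i => nndist (y i) (midCube k i))
  refine ⟨i, ?_⟩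
  have : dist y (midCube k) = dist (y i) (midCube k i) := by
    rw [dist_nndist, dist_nndist, nndist_pi_def, hi]
  rw [this, Subtype.dist_eq, Real.dist_eq, show ((midCube k i : ℝ)) = 1/2 from rfl]

/-- rescaling of the cube by factor `1/(1-2s)` around the center -/
noncomputable def resc {k : ℕ} (y : Fin k → I) (s : I) : Fin k → I :=
  fun i => pI (((y i : ℝ) - 1/2) / (1 - 2*(s:ℝ)) + 1/2)

noncomputable def brA {k : ℕ} (f : C((Fin k → I), Cone X)) : (Fin k → I) × I → Cone X :=
  fun z => contr (f (resc z.1 z.2), pI (2 * (z.2:ℝ)))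

noncomputable def brB {k : ℕ} (x₀ : X) (t₀ : I) : (Fin k → I) × I → Cone X :=
  fun z => Quot.mk _ (x₀, vert t₀ (pI (1 - max (2 * dist z.1 (midCube k)) |2 * (z.2:ℝ) - 1|)))

def Aset (k : ℕ) : Set ((Fin k → I) × I) :=
  {z | 2 * dist z.1 (midCube k) + 2 * (z.2:ℝ) ≤ 1}

lemma continuous_brB {k : ℕ} (x₀ : X) (t₀ : I) : Continuous (brB (k := k) x₀ t₀) := by
  have hv : Continuous fun w : I => vert t₀ w :=
    continuous_vert.comp (continuous_const.prodMk continuous_id)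
  exact continuous_quot_mk.comp (continuous_const.prodMk
    (hv.comp (continuous_pI.comp (by fun_prop))))

lemma continuousAt_brA {k : ℕ} (f : C((Fin k → I), Cone X)) {z : (Fin k → I) × I}
    (hz : (z.2 : ℝ) ≠ 1/2) : ContinuousAt (brA f) z := by
  apply ContinuousAt.comp (contr.continuous.continuousAt)
  apply ContinuousAt.prodMk
  · apply ContinuousAt.comp (f.continuous.continuousAt)
    apply continuousAt_pi.mpr
    intro i
    apply ContinuousAt.comp (continuous_pI.continuousAt)
    apply ContinuousAt.add ?_ continuousAt_const
    apply ContinuousAt.div (by fun_prop) (by fun_prop)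
    intro h
    apply hz
    linarith [h]
  · exact (continuous_pI.comp (by fun_prop)).continuousAt

lemma continuousAt_brA_bad {k : ℕ} (f : C((Fin k → I), Cone X)) :
    ContinuousAt (brA f) (midCube k, halfI) := by
  have hpI1 : pI (2 * ((halfI : I) : ℝ)) = 1 := by
    rw [show (2 * ((halfI : I) : ℝ)) = 1 by norm_num [halfI]]
    exact pI_one
  rw [ContinuousAt, Filter.tendsto_def]
  intro W hW
  have hWval : W ∈ nhds (contr (f (resc (midCube k) halfI), (1:I))) := by
    have : brA f (midCube k, halfI) = contr (f (resc (midCube k) halfI), (1:I)) := by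
      show contr (_, pI (2 * ((halfI : I) : ℝ))) = _
      rw [hpI1]
    rwa [this] at hW
  obtain ⟨W', hsub, hopen, hmem⟩ := mem_nhds_iff.mp hWval
  have hK : IsCompact (Set.range f) := isCompact_range f.continuous
  have hKW : (Set.range f) ×ˢ ({1} : Set I) ⊆ (⇑contr) ⁻¹' W' := by
    rintro ⟨z, s⟩ ⟨⟨y, rfl⟩, hs⟩
    rcases hs with rfl
    show contr (f y, 1) ∈ W'
    rw [contr_one' (f y) (f (resc (midCube k) halfI))]
    exact hmem
  obtain ⟨u, v, hu, hv, hKu, h1v, huv⟩ :=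
    generalized_tube_lemma hK isCompact_singleton (hopen.preimage contr.continuous) hKW
  have hopen2 : IsOpen {z : (Fin k → I) × I | pI (2*((z.2:I):ℝ)) ∈ v} :=
    hv.preimage (continuous_pI.comp (by fun_prop))
  have hbadmem : (midCube k, halfI) ∈ {z : (Fin k → I) × I | pI (2*((z.2:I):ℝ)) ∈ v} := by
    show pI (2 * ((halfI : I) : ℝ)) ∈ v
    rw [hpI1]
    exact h1v rfl
  filter_upwards [hopen2.mem_nhds hbadmem] with z hz
  exact hsub (huv ⟨hKu ⟨_, rfl⟩, hz⟩)
lemma resc_zero {k : ℕ} (y : Fin k → I) : resc y 0 = y := by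
  funext i
  ext
  have h0 : ((0:I):ℝ) = 0 := rfl
  rw [resc, pI_coe (by rw [h0]; constructor <;> [nlinarith [(y i).2.1]; nlinarith [(y i).2.2]])]
  rw [h0]
  ring

lemma frontier_brAB {k : ℕ} (x₀ : X) (t₀ : I) (f : C((Fin k → I), Cone X))
    (hf : ∀ y ∈ Cube.boundary (Fin k), f y = Quot.mk (ConeRel X) (x₀, t₀)) :
    ∀ z ∈ frontier (Aset k), brA f z = brB x₀ t₀ z := by
  intro z hz
  have heq : 2 * dist z.1 (midCube k) + 2 * (z.2:ℝ) = 1 := by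
    have h := frontier_le_subset_eq
      (f := fun z : (Fin k → I) × I => 2 * dist z.1 (midCube k) + 2 * (z.2:ℝ))
      (g := fun _ => (1:ℝ)) (by fun_prop) continuous_const
    exact h hz
  obtain ⟨y, s⟩ := z
  simp only at heq
  have hd0 : 0 ≤ dist y (midCube k) := dist_nonneg
  have hs : (s:ℝ) ≤ 1/2 := by linarith
  show contr (f (resc y s), pI (2 * (s:ℝ))) =
    Quot.mk _ (x₀, vert t₀ (pI (1 - max (2 * dist y (midCube k)) |2 * (s:ℝ) - 1|)))
  by_cases hr : dist y (midCube k) = 0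
  · have hs2 : (s:ℝ) = 1/2 := by rw [hr] at heq; linarith
    have h2s : pI (2*(s:ℝ)) = 1 := by rw [hs2]; norm_num; exact pI_one
    rw [h2s, hr, hs2]
    have : (1 - max (2*(0:ℝ)) |2*(1/2:ℝ) - 1|) = 1 := by norm_num
    rw [this, pI_one, vert_one]
    exact contr_one _ x₀
  · have hdpos : 0 < dist y (midCube k) := lt_of_le_of_ne hd0 (Ne.symm hr)
    have hrs : 1 - 2*(s:ℝ) = 2 * dist y (midCube k) := by linarith
    have hcoe : ∀ i, ((resc y s i : ℝ)) = ((y i : ℝ) - 1/2) / (1 - 2*(s:ℝ)) + 1/2 := by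
      intro i
      apply pI_coe
      have h1 : |(y i : ℝ) - 1/2| ≤ dist y (midCube k) := dist_coord_le y i
      have h2 : |((y i : ℝ) - 1/2) / (1 - 2*(s:ℝ))| ≤ 1/2 := by
        rw [hrs, abs_div, abs_of_pos (by linarith : (0:ℝ) < 2 * dist y (midCube k)),
          div_le_iff₀ (by linarith)]
        linarith
      rw [abs_le] at h2
      constructor <;> [linarith [h2.1]; linarith [h2.2]]
    have hbd : resc y s ∈ Cube.boundary (Fin k) := by
      obtain ⟨i, hi⟩ := exists_coord_dist hdpos
      apply mem_boundary_of_coord (i := i)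
      rw [hcoe i]
      have : ((y i : ℝ) - 1/2) / (1 - 2*(s:ℝ)) + 1/2 - 1/2
          = ((y i : ℝ) - 1/2) / (1 - 2*(s:ℝ)) := by ring
      rw [this, hrs, abs_div, abs_of_pos (by linarith : (0:ℝ) < 2 * dist y (midCube k)), hi]
      field_simp
    rw [hf _ hbd, contr_mk]
    have habs : |2*(s:ℝ) - 1| = 2 * dist y (midCube k) := by
      rw [abs_of_nonpos (by linarith)]
      linarith
    rw [habs, max_self]
    have : (1 : ℝ) - 2 * dist y (midCube k) = 2*(s:ℝ) := by linarith
    rw [this]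

lemma exists_nullHomotopy (x₀ : X) (t₀ : I) {k : ℕ} (f : C((Fin k → I), Cone X))
    (hf : ∀ y ∈ Cube.boundary (Fin k), f y = Quot.mk (ConeRel X) (x₀, t₀)) :
    ∃ H : C((Fin k → I) × I, Cone X),
      (∀ y, H (y, 0) = f y) ∧ (∀ y, H (y, 1) = Quot.mk (ConeRel X) (x₀, t₀)) ∧
      (∀ s, ∀ y, y ∈ Cube.boundary (Fin k) → H (y, s) = Quot.mk (ConeRel X) (x₀, t₀)) := by
  classical
  have hAclosed : IsClosed (Aset k) := isClosed_le (by fun_prop) continuous_const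
  have hGcont : Continuous ((Aset k).piecewise (brA f) (brB x₀ t₀)) := by
    apply continuous_piecewise (frontier_brAB x₀ t₀ f hf)
    · rw [hAclosed.closure_eq]
      intro z hz
      by_cases hz2 : (z.2:ℝ) = 1/2
      · have hzd : dist z.1 (midCube k) = 0 := by
          have hzA : 2 * dist z.1 (midCube k) + 2 * (z.2:ℝ) ≤ 1 := hz
          have := dist_nonneg (x := z.1) (y := midCube k)
          linarith
        have hz1 : z = (midCube k, halfI) := by
          obtain ⟨y, s⟩ := z
          simp only at hz2 hzd
          rw [dist_eq_zero] at hzd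
          rw [hzd]
          congr 1
          ext
          exact hz2
        rw [hz1]
        exact (continuousAt_brA_bad f).continuousWithinAt
      · exact (continuousAt_brA f hz2).continuousWithinAt
    · exact (continuous_brB x₀ t₀).continuousOn
  refine ⟨⟨(Aset k).piecewise (brA f) (brB x₀ t₀), hGcont⟩, ?_, ?_, ?_⟩
  · intro y
    have hmem : ((y, (0:I)) : (Fin k → I) × I) ∈ Aset k := by
      show 2 * dist y (midCube k) + 2 * (((0:I)):ℝ) ≤ 1
      rw [show (((0:I)):ℝ) = 0 from rfl]
      have := dist_midCube_le y
      linarith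
    show (Aset k).piecewise (brA f) (brB x₀ t₀) (y, 0) = f y
    rw [Set.piecewise_eq_of_mem _ _ _ hmem]
    show contr (f (resc y 0), pI (2 * (((0:I)):ℝ))) = f y
    rw [resc_zero, show (2 * (((0:I)):ℝ)) = 0 by norm_num [show (((0:I)):ℝ) = 0 from rfl],
      pI_zero, contr_zero]
  · intro y
    have hmem : ((y, (1:I)) : (Fin k → I) × I) ∉ Aset k := by
      show ¬ (2 * dist y (midCube k) + 2 * (((1:I)):ℝ) ≤ 1)
      rw [show (((1:I)):ℝ) = 1 from rfl]
      have := dist_nonneg (x := y) (y := midCube k)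
      push_neg
      linarith
    show (Aset k).piecewise (brA f) (brB x₀ t₀) (y, 1) = Quot.mk (ConeRel X) (x₀, t₀)
    rw [Set.piecewise_eq_of_notMem _ _ _ hmem]
    show Quot.mk _ (x₀, vert t₀ (pI (1 - max (2 * dist y (midCube k)) |2 * (((1:I)):ℝ) - 1|)))
      = Quot.mk (ConeRel X) (x₀, t₀)
    rw [show (((1:I)):ℝ) = 1 from rfl]
    have hmax : max (2 * dist y (midCube k)) |2 * (1:ℝ) - 1| = 1 := by
      have := dist_midCube_le y
      rw [show |2 * (1:ℝ) - 1| = 1 by norm_num]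
      rw [max_eq_right]
      linarith
    rw [hmax]
    norm_num [pI_zero]
  · intro s y hy
    have hd : dist y (midCube k) = 1/2 := boundary_dist hy
    by_cases hs0 : s = 0
    · subst hs0
      have hmem : ((y, (0:I)) : (Fin k → I) × I) ∈ Aset k := by
        show 2 * dist y (midCube k) + 2 * (((0:I)):ℝ) ≤ 1
        rw [hd, show (((0:I)):ℝ) = 0 from rfl]
        norm_num
      show (Aset k).piecewise (brA f) (brB x₀ t₀) (y, 0) = Quot.mk (ConeRel X) (x₀, t₀)
      rw [Set.piecewise_eq_of_mem _ _ _ hmem]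
      show contr (f (resc y 0), pI (2 * (((0:I)):ℝ))) = Quot.mk (ConeRel X) (x₀, t₀)
      rw [resc_zero, show (2 * (((0:I)):ℝ)) = 0 by norm_num [show (((0:I)):ℝ) = 0 from rfl],
        pI_zero, contr_zero]
      exact hf y hy
    · have hspos : 0 < (s:ℝ) := by
        rcases lt_or_eq_of_le s.2.1 with h | h
        · exact h
        · exact absurd (Subtype.ext h.symm) hs0
      have hmem : ((y, s) : (Fin k → I) × I) ∉ Aset k := by
        show ¬ (2 * dist y (midCube k) + 2 * ((s:I):ℝ) ≤ 1)
        rw [hd]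
        push_neg
        linarith
      show (Aset k).piecewise (brA f) (brB x₀ t₀) (y, s) = Quot.mk (ConeRel X) (x₀, t₀)
      rw [Set.piecewise_eq_of_notMem _ _ _ hmem]
      show Quot.mk _ (x₀, vert t₀ (pI (1 - max (2 * dist y (midCube k)) |2 * ((s:I):ℝ) - 1|)))
        = Quot.mk (ConeRel X) (x₀, t₀)
      have hmax : max (2 * dist y (midCube k)) |2 * ((s:I):ℝ) - 1| = 1 := by
        rw [hd]
        have h1 := s.2.1
        have h2 := s.2.2
        rw [show (2:ℝ) * (1/2) = 1 by norm_num, max_eq_left]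
        rw [abs_le]
        constructor <;> linarith
      rw [hmax]
      norm_num [pI_zero]
/-! ### Lifting maps that avoid the apex -/

open scoped Classical in
noncomputable def lft (x₀ : X) (t : I) : Cone X → X × I := fun z =>
  if h : ∃ w : X × I, w.2 ≠ 1 ∧ Quot.mk (ConeRel X) w = z then h.choose else (x₀, t)

lemma lft_mk {x₀ : X} {t : I} {w : X × I} (hw : w.2 ≠ 1) :
    lft x₀ t (Quot.mk (ConeRel X) w) = w := by
  have hex : ∃ w' : X × I, w'.2 ≠ 1 ∧ Quot.mk (ConeRel X) w' = Quot.mk (ConeRel X) w :=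
    ⟨w, hw, rfl⟩
  classical
  unfold lft
  rw [dif_pos hex]
  obtain ⟨h1, h2⟩ := hex.choose_spec
  rcases mk_eq_mk.mp h2 with heq | ⟨ha, hb⟩
  · exact heq
  · exact absurd ha h1

lemma continuous_lft {A : Type*} [TopologicalSpace A] (x₀ : X) (t : I) (g : C(A, Cone X))
    (hg : ∀ a, ∃ w : X × I, w.2 ≠ 1 ∧ Quot.mk (ConeRel X) w = g a) :
    Continuous fun a => lft x₀ t (g a) := by
  rw [continuous_iff_continuousAt]
  intro a
  obtain ⟨w, hw1, hw2⟩ := hg a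
  rw [ContinuousAt, ← hw2, lft_mk hw1, Filter.tendsto_def]
  intro N hN
  obtain ⟨O, hON, hO, hwO⟩ := mem_nhds_iff.mp hN
  have hO'open : IsOpen (O ∩ {w : X × I | w.2 ≠ 1}) :=
    hO.inter ((isOpen_compl_singleton).preimage continuous_snd)
  have himg : IsOpen (Quot.mk (ConeRel X) '' (O ∩ {w : X × I | w.2 ≠ 1})) :=
    isOpen_image_mk hO'open (fun w hw => hw.2)
  have hga : g a ∈ Quot.mk (ConeRel X) '' (O ∩ {w : X × I | w.2 ≠ 1}) :=
    ⟨w, ⟨hwO, hw1⟩, hw2⟩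
  have hpre := (g.continuous.continuousAt (x := a)).preimage_mem_nhds (himg.mem_nhds hga)
  filter_upwards [hpre] with a' ha'
  obtain ⟨w', hw'O', hq⟩ := ha'
  show lft x₀ t (g a') ∈ N
  rw [← hq, lft_mk hw'O'.2]
  exact hON hw'O'.1

end ConeAux

open ConeAux

/-- If `X` is sequentially `n`-connected at `x₀`, then the unreduced cone `CX` is sequentially
`n`-connected at every point `(x₀, t)` of the arc `{x₀} × I ⊆ CX`. -/
theorem seqNConnectedAt_cone {X : Type*} [TopologicalSpace X] (n : ℕ) (x₀ : X)
    (hX : SeqNConnectedAt n X x₀) :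
    ∀ t : I, SeqNConnectedAt n (Cone X) (Quot.mk (ConeRel X) (x₀, t)) := by
  intro t₀ k hk f hbase hclus
  classical
  by_cases ht : t₀ = 1
  · -- the apex case: contract along the cone directly
    subst ht
    refine ⟨fun m => ⟨fun z => contr (f m z.1, z.2),
      contr.continuous.comp (((f m).continuous.comp continuous_fst).prodMk continuous_snd)⟩,
      ?_, ?_, ?_, ?_⟩
    · intro m y
      exact contr_zero (f m y)
    · intro m y
      exact contr_one (f m y) x₀
    · intro m s y hy
      show contr (f m y, s) = _
      rw [hbase m y hy, contr_mk, vert_one_left]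
    · intro W hW
      obtain ⟨V, hVnhds, hVW, hVinv⟩ := exists_invariant_nhds x₀ hW
      refine (hclus V hVnhds).subset ?_
      intro m hm
      simp only [mem_setOf_eq] at hm ⊢
      intro hr
      apply hm
      rintro _ ⟨⟨y, s⟩, rfl⟩
      exact hVW (hVinv (f m y) (hr ⟨y, rfl⟩) s)
  · -- t₀ < 1 : lift to X × I near the basepoint
    have hSopen : IsOpen {w : X × I | w.2 ≠ 1} :=
      (isOpen_compl_singleton).preimage continuous_snd
    have hqS : IsOpen (Quot.mk (ConeRel X) '' {w : X × I | w.2 ≠ 1}) :=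
      isOpen_image_mk hSopen (fun w hw => hw)
    have hpS : Quot.mk (ConeRel X) (x₀, t₀) ∈ Quot.mk (ConeRel X) '' {w : X × I | w.2 ≠ 1} :=
      ⟨(x₀, t₀), ht, rfl⟩
    set good : ℕ → Prop :=
      fun m => ∀ y, ∃ w : X × I, w.2 ≠ 1 ∧ Quot.mk (ConeRel X) w = f m y with hgooddef
    have hbadfin : {m | ¬ good m}.Finite := by
      refine (hclus _ (hqS.mem_nhds hpS)).subset ?_
      intro m hm
      simp only [mem_setOf_eq] at hm ⊢
      intro hrange
      exact hm (fun y => hrange ⟨y, rfl⟩)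
    set F : ℕ → C((Fin k → I), X × I) := fun m =>
      if h : good m then ⟨fun y => lft x₀ t₀ (f m y), continuous_lft x₀ t₀ (f m) h⟩
      else ContinuousMap.const _ (x₀, t₀) with hF
    have hFgood : ∀ m, good m → ∀ y, Quot.mk (ConeRel X) (F m y) = f m y ∧ (F m y).2 ≠ 1 := by
      intro m hm y
      obtain ⟨w, hw1, hw2⟩ := hm y
      rw [hF]
      simp only [dif_pos hm, ContinuousMap.coe_mk]
      rw [← hw2, lft_mk hw1]
      exact ⟨rfl, hw1⟩
    have hFbdry : ∀ m, ∀ y ∈ Cube.boundary (Fin k), F m y = (x₀, t₀) := by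
      intro m y hy
      by_cases hm : good m
      · rw [hF]
        simp only [dif_pos hm, ContinuousMap.coe_mk]
        rw [hbase m y hy, lft_mk (show ((x₀, t₀) : X × I).2 ≠ 1 from ht)]
      · rw [hF]
        simp only [dif_neg hm]
        rfl
    have hrange : ∀ m (O : Set (X × I)), O ⊆ {w : X × I | w.2 ≠ 1} → good m →
        (Set.range (f m) ⊆ Quot.mk (ConeRel X) '' O) → ∀ y, F m y ∈ O := by
      intro m O hOS hm hr y
      obtain ⟨w, hwO, hwq⟩ := hr ⟨y, rfl⟩
      have h2 := hFgood m hm y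
      have heq : F m y = w := by
        have hq := h2.1.trans hwq.symm
        rcases mk_eq_mk.mp hq with heq | ⟨ha, hb⟩
        · exact heq
        · exact absurd ha h2.2
      rw [heq]
      exact hwO
    set a : ℕ → C((Fin k → I), X) :=
      fun m => ⟨fun y => (F m y).1, continuous_fst.comp (F m).continuous⟩ with ha
    have habdry : ∀ m, ∀ y ∈ Cube.boundary (Fin k), a m y = x₀ := by
      intro m y hy
      show (F m y).1 = x₀
      rw [hFbdry m y hy]
    have haclus : ClustersAt a x₀ := by
      intro U hU
      obtain ⟨U', hU'sub, hU'open, hU'mem⟩ := mem_nhds_iff.mp hU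
      have hOopen : IsOpen ((U' ×ˢ (univ : Set I)) ∩ {w : X × I | w.2 ≠ 1}) :=
        (hU'open.prod isOpen_univ).inter hSopen
      have himg : IsOpen (Quot.mk (ConeRel X) '' ((U' ×ˢ (univ : Set I)) ∩ {w : X × I | w.2 ≠ 1})) :=
        isOpen_image_mk hOopen (fun w hw => hw.2)
      have hmem : Quot.mk (ConeRel X) (x₀, t₀) ∈
          Quot.mk (ConeRel X) '' ((U' ×ˢ (univ : Set I)) ∩ {w : X × I | w.2 ≠ 1}) :=
        ⟨(x₀, t₀), ⟨⟨hU'mem, mem_univ _⟩, ht⟩, rfl⟩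
      refine (hclus _ (himg.mem_nhds hmem)).subset ?_
      intro m hm
      simp only [mem_setOf_eq] at hm ⊢
      intro hr
      apply hm
      rintro _ ⟨y, rfl⟩
      show (F m y).1 ∈ U
      by_cases hgm : good m
      · exact hU'sub (hrange m _ inter_subset_right hgm hr y).1.1
      · rw [hF]
        simp only [dif_neg hgm]
        exact hU'sub hU'mem
    obtain ⟨G, hG0, hG1, hGb, hGc⟩ := hX k hk a habdry haclus
    set τ : ℕ → (Fin k → I) → I := fun m y => (F m y).2 with hτ
    set Hg : ℕ → C((Fin k → I) × I, Cone X) := fun m =>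
      ⟨fun z => Quot.mk (ConeRel X)
          (G m z, pI ((1 - (z.2:ℝ)) * ((F m z.1).2 : ℝ) + (z.2:ℝ) * (t₀:ℝ))),
        continuous_quot_mk.comp ((G m).continuous.prodMk
          (continuous_pI.comp (by fun_prop)))⟩ with hHg
    choose Hb hb0 hb1 hbb using fun m => exists_nullHomotopy x₀ t₀ (f m) (hbase m)
    set H : ℕ → C((Fin k → I) × I, Cone X) := fun m => if good m then Hg m else Hb m with hH
    have hHgood : ∀ m, good m → ∀ y s, H m (y, s) = Quot.mk (ConeRel X)
        (G m (y, s), pI ((1 - (s:ℝ)) * ((F m y).2 : ℝ) + (s:ℝ) * (t₀:ℝ))) := by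
      intro m hm y s
      rw [hH]
      simp only [if_pos hm]
      rfl
    refine ⟨H, ?_, ?_, ?_, ?_⟩
    · intro m y
      by_cases hm : good m
      · rw [hHgood m hm]
        have h0 : ((0:I):ℝ) = 0 := rfl
        rw [hG0]
        have : ((1 - ((0:I):ℝ)) * ((F m y).2 : ℝ) + ((0:I):ℝ) * (t₀:ℝ)) = ((F m y).2 : ℝ) := by
          rw [h0]; ring
        rw [this, pI_val]
        have : (a m y, (F m y).2) = F m y := rfl
        rw [this]
        exact (hFgood m hm y).1
      · rw [hH]
        simp only [if_neg hm]
        exact hb0 m y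
    · intro m y
      by_cases hm : good m
      · rw [hHgood m hm]
        have h1 : ((1:I):ℝ) = 1 := rfl
        rw [hG1]
        have : ((1 - ((1:I):ℝ)) * ((F m y).2 : ℝ) + ((1:I):ℝ) * (t₀:ℝ)) = (t₀:ℝ) := by
          rw [h1]; ring
        rw [this, pI_val]
      · rw [hH]
        simp only [if_neg hm]
        exact hb1 m y
    · intro m s y hy
      by_cases hm : good m
      · rw [hHgood m hm]
        rw [hGb m s y hy, hFbdry m y hy]
        have : ((1 - (s:ℝ)) * (((x₀, t₀) : X × I).2 : ℝ) + (s:ℝ) * (t₀:ℝ)) = (t₀:ℝ) := by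
          show ((1 - (s:ℝ)) * (t₀ : ℝ) + (s:ℝ) * (t₀:ℝ)) = (t₀:ℝ)
          ring
        rw [this, pI_val]
      · rw [hH]
        simp only [if_neg hm]
        exact hbb m s y hy
    · intro W hW
      have hqW : Quot.mk (ConeRel X) ⁻¹' W ∈ nhds (x₀, t₀) :=
        (continuous_quot_mk.continuousAt).preimage_mem_nhds hW
      rw [mem_nhds_prod_iff] at hqW
      obtain ⟨U, hU, V, hV, hUV⟩ := hqW
      obtain ⟨r, hr, hball⟩ := Metric.mem_nhds_iff.mp hV
      have hO₂open : IsOpen (((univ : Set X) ×ˢ Metric.ball t₀ r) ∩ {w : X × I | w.2 ≠ 1}) :=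
        (isOpen_univ.prod Metric.isOpen_ball).inter hSopen
      have himg : IsOpen (Quot.mk (ConeRel X) ''
          (((univ : Set X) ×ˢ Metric.ball t₀ r) ∩ {w : X × I | w.2 ≠ 1})) :=
        isOpen_image_mk hO₂open (fun w hw => hw.2)
      have hmem : Quot.mk (ConeRel X) (x₀, t₀) ∈ Quot.mk (ConeRel X) ''
          (((univ : Set X) ×ˢ Metric.ball t₀ r) ∩ {w : X × I | w.2 ≠ 1}) :=
        ⟨(x₀, t₀), ⟨⟨mem_univ _, Metric.mem_ball_self hr⟩, ht⟩, rfl⟩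
      have h1 := hclus _ (himg.mem_nhds hmem)
      have h2 := hGc U hU
      refine ((h1.union h2).union hbadfin).subset ?_
      intro m hm
      simp only [mem_union, mem_setOf_eq] at hm ⊢
      by_contra hcon
      push_neg at hcon
      obtain ⟨⟨hf2, hG2⟩, hgm⟩ := hcon
      apply hm
      rintro _ ⟨⟨y, s⟩, rfl⟩
      rw [hHgood m hgm]
      have hGU : G m (y, s) ∈ U := hG2 ⟨(y, s), rfl⟩
      have hτball : (F m y).2 ∈ Metric.ball t₀ r :=
        (hrange m _ inter_subset_right hgm hf2 y).1.2
      have e1 : (0:ℝ) ≤ 1 - (s:ℝ) := by linarith [s.2.2]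
      have hmem2 : ((1 - (s:ℝ)) * (((F m y).2) : ℝ) + (s:ℝ) * (t₀:ℝ)) ∈ Icc (0:ℝ) 1 := by
        constructor
        · exact add_nonneg (mul_nonneg e1 ((F m y).2).2.1) (mul_nonneg s.2.1 t₀.2.1)
        · nlinarith [((F m y).2).2.2, t₀.2.2, s.2.1, s.2.2]
      have hheight : pI ((1 - (s:ℝ)) * (((F m y).2) : ℝ) + (s:ℝ) * (t₀:ℝ)) ∈ Metric.ball t₀ r := by
        rw [Metric.mem_ball, Subtype.dist_eq, pI_coe hmem2, Real.dist_eq]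
        rw [Metric.mem_ball, Subtype.dist_eq, Real.dist_eq] at hτball
        have heq2 : (1 - (s:ℝ)) * (((F m y).2) : ℝ) + (s:ℝ) * (t₀:ℝ) - (t₀:ℝ)
            = (1 - (s:ℝ)) * ((((F m y).2) : ℝ) - (t₀:ℝ)) := by ring
        rw [heq2, abs_mul, abs_of_nonneg e1]
        nlinarith [abs_nonneg ((((F m y).2) : ℝ) - (t₀:ℝ)), s.2.1, s.2.2]
      exact hUV ⟨hGU, hball hheight⟩
end

section
/- Suppose (Y, y₀) is sequentially 0-connected and (X, x₀) is well-pointed (the inclusion {x₀} → X is a cofibration). Then every sequence {f_k} of continuous maps X → Y that converges to y₀ is sequentially (freely) homotopic to a sequence {g_k} of based maps (X, x₀) → (Y, y₀) that converges to y₀. -/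
open Set unitInterval

universe u

/-- `(Y, y₀)` is sequentially 0-connected: every sequence `y_k → y₀` admits a sequence of
paths from `y₀` to `y_k` converging to `y₀`. -/
def SeqZeroConnectedAt (Y : Type*) [TopologicalSpace Y] (y₀ : Y) : Prop :=
  ∀ u : ℕ → Y, Filter.Tendsto u Filter.atTop (nhds y₀) →
    ∃ α : ℕ → C(I, Y), (∀ k, α k 0 = y₀ ∧ α k 1 = u k) ∧ ClustersAt α y₀

/-- `i : A → X` is a cofibration: it has the homotopy extension property. -/
def IsCofibration {A X : Type u} [TopologicalSpace A] [TopologicalSpace X]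
    (i : C(A, X)) : Prop :=
  ∀ (Z : Type u) [TopologicalSpace Z] (f : C(X, Z)) (H : C(A × I, Z)),
    (∀ a, H (a, 0) = f (i a)) →
    ∃ G : C(X × I, Z), (∀ x, G (x, 0) = f x) ∧ ∀ a t, G (i a, t) = H (a, t)

/-- If `(Y, y₀)` is sequentially 0-connected and `(X, x₀)` is well-pointed (the inclusion
`{x₀} → X` is a cofibration), then every sequence of maps `X → Y` converging to `y₀` is
sequentially (freely) homotopic to a sequence of based maps `(X, x₀) → (Y, y₀)`
converging to `y₀`. -/
theorem seq_homotopic_to_based {X Y : Type u} [TopologicalSpace X] [TopologicalSpace Y]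
    (x₀ : X) (y₀ : Y) (hY : SeqZeroConnectedAt Y y₀)
    (hX : IsCofibration (⟨fun _ : PUnit => x₀, continuous_const⟩ : C(PUnit, X)))
    (f : ℕ → C(X, Y)) (hf : ClustersAt f y₀) :
    ∃ g : ℕ → C(X, Y), (∀ k, g k x₀ = y₀) ∧ ClustersAt g y₀ ∧
      ∃ H : ℕ → C(X × I, Y),
        (∀ k x, H k (x, 0) = f k x) ∧ (∀ k x, H k (x, 1) = g k x) ∧ ClustersAt H y₀ := by
  -- Step 1: `f k x₀ → y₀`.
  have htend : Filter.Tendsto (fun k => f k x₀) Filter.atTop (nhds y₀) := by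
    intro U hU
    have hfin := hf U hU
    have h1 : ∀ᶠ k in Filter.cofinite, Set.range (f k) ⊆ U := by
      rw [Filter.eventually_cofinite]
      simpa using hfin
    rw [Nat.cofinite_eq_atTop] at h1
    exact h1.mono fun k hk => hk ⟨x₀, rfl⟩
  -- Step 2: paths from `y₀` to `f k x₀`.
  obtain ⟨α, hα, hαcl⟩ := hY (fun k => f k x₀) htend
  -- Step 3: retraction onto the mapping cylinder.
  set Z : Type u := {p : X × I // p.2 = 0 ∨ p.1 = x₀} with hZ
  have hr : ∃ r : C(X × I, Z), (∀ x, (r (x, 0)).val = (x, 0)) ∧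
      ∀ t, (r (x₀, t)).val = (x₀, t) := by
    obtain ⟨r, hr0, hr1⟩ := hX Z
      ⟨fun x => ⟨(x, (0 : I)), Or.inl rfl⟩, by
        exact Continuous.subtype_mk (by continuity) _⟩
      ⟨fun p => ⟨(x₀, p.2), Or.inr rfl⟩, by
        exact Continuous.subtype_mk (by continuity) _⟩
      (fun a => by apply Subtype.ext; rfl)
    exact ⟨r, fun x => congrArg Subtype.val (hr0 x),
      fun t => congrArg Subtype.val (hr1 PUnit.unit t)⟩
  obtain ⟨r, hr0, hr1⟩ := hr
  -- Step 4: for each k, extend the path homotopy over X.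
  have hG : ∀ k : ℕ, ∃ G : C(X × I, Y), (∀ x, G (x, 0) = f k x) ∧
      ∀ t, G (x₀, t) = α k (σ t) := by
    intro k
    obtain ⟨G, hG0, hG1⟩ := hX Y (f k)
      ⟨fun p => α k (σ p.2), by
        exact (α k).continuous.comp (continuous_symm.comp continuous_snd)⟩
      (fun a => by simp [(hα k).2])
    exact ⟨G, hG0, fun t => hG1 PUnit.unit t⟩
  choose G hG0 hG1 using hG
  -- Step 5: the homotopy and the based maps.
  set H : ℕ → C(X × I, Y) := fun k =>
    (G k).comp (ContinuousMap.comp ⟨Subtype.val, continuous_subtype_val⟩ r) with hH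
  have hHrange : ∀ k, Set.range (H k) ⊆ Set.range (f k) ∪ Set.range (α k) := by
    rintro k y ⟨⟨x, t⟩, rfl⟩
    rcases (r (x, t)).2 with h | h
    · left
      refine ⟨(r (x, t)).1.1, ?_⟩
      have : ((r (x, t)).val : X × I) = ((r (x, t)).1.1, 0) := Prod.ext rfl h
      simp only [hH, ContinuousMap.comp_apply, ContinuousMap.coe_mk]
      rw [this, hG0]
    · right
      refine ⟨σ (r (x, t)).1.2, ?_⟩
      have : ((r (x, t)).val : X × I) = (x₀, (r (x, t)).1.2) := Prod.ext h rfl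
      simp only [hH, ContinuousMap.comp_apply, ContinuousMap.coe_mk]
      rw [this, hG1]
  have hH0 : ∀ k x, H k (x, 0) = f k x := by
    intro k x
    simp only [hH, ContinuousMap.comp_apply, ContinuousMap.coe_mk]
    rw [hr0, hG0]
  set g : ℕ → C(X, Y) := fun k => (H k).comp ⟨fun x => (x, 1), by continuity⟩ with hg
  have hgrange : ∀ k, Set.range (g k) ⊆ Set.range (H k) := by
    rintro k y ⟨x, rfl⟩; exact ⟨(x, 1), rfl⟩
  refine ⟨g, ?_, ?_, H, hH0, fun k x => rfl, ?_⟩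
  · intro k
    simp only [hg, hH, ContinuousMap.comp_apply, ContinuousMap.coe_mk]
    rw [hr1, hG1]
    simp [(hα k).1]
  · intro U hU
    apply ((hf U hU).union (hαcl U hU)).subset
    intro k hk
    by_contra hc
    simp only [Set.mem_union, Set.mem_setOf_eq, not_or, not_not] at hc
    exact hk (((hgrange k).trans ((hHrange k).trans (Set.union_subset hc.1 hc.2))))
  · intro U hU
    apply ((hf U hU).union (hαcl U hU)).subset
    intro k hk
    by_contra hc
    simp only [Set.mem_union, Set.mem_setOf_eq, not_or, not_not] at hc
    exact hk ((hHrange k).trans (Set.union_subset hc.1 hc.2))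
end

section
/- Let Y = Adj(X, x_j, A_j, a_j) be a shrinking adjunction space with X and all A_j compact. Then Y is a Peano continuum if and only if X and each A_j are Peano continua. -/
set_option linter.unusedSectionVars false

open Set Filter Topology

namespace ShrinkingAdjunction

variable (X : Type*) [TopologicalSpace X] (A : ℕ → Type*) [∀ j, TopologicalSpace (A j)]
  (x : ℕ → X) (a : ∀ j, A j)

/-- Gluing relation for the `k`-th finite adjunction space on the carrier `X ⊕ Σ j, A j`:
for `j < k` the copy of `A j` is attached to `x j` along its basepoint `a j`, and for
`j ≥ k` the copy of `A j` is collapsed entirely to `x j`. -/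
def rel (k : ℕ) : (X ⊕ Σ j : ℕ, A j) → (X ⊕ Σ j : ℕ, A j) → Prop := fun p q =>
  ∃ j b, (j < k → b = a j) ∧
    ((p = Sum.inl (x j) ∧ q = Sum.inr ⟨j, b⟩) ∨ (q = Sum.inl (x j) ∧ p = Sum.inr ⟨j, b⟩))

/-- The `k`-th finite adjunction space `Y_k`, with the quotient (weak) topology. -/
def FinAdj (k : ℕ) : Type _ := Quot (rel X A x a k)

instance (k : ℕ) : TopologicalSpace (FinAdj X A x a k) :=
  inferInstanceAs (TopologicalSpace (Quot _))

/-- The bonding retraction `ρ_{k+1,k} : Y_{k+1} → Y_k`, collapsing `A_{k+1}` to `x_{k+1}`. -/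
def bond (k : ℕ) : FinAdj X A x a (k + 1) → FinAdj X A x a k :=
  Quot.lift (Quot.mk _) fun p q h =>
    Quot.sound (by
      obtain ⟨j, b, hj, hpq⟩ := h
      exact ⟨j, b, fun h' => hj (Nat.lt_succ_of_lt h'), hpq⟩)

/-- The shrinking adjunction space `Adj(X, x_j, A_j, a_j)`: the inverse limit of the finite
adjunction spaces `Y_k`, topologized as a subspace of the product `∏ k, Y_k`. -/
def ShrAdj : Type _ :=
  {y : ∀ k, FinAdj X A x a k // ∀ k, bond X A x a k (y (k + 1)) = y k}

instance : TopologicalSpace (ShrAdj X A x a) :=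
  inferInstanceAs (TopologicalSpace
    {y : ∀ k, FinAdj X A x a k // ∀ k, bond X A x a k (y (k + 1)) = y k})

/-- Canonical inclusion of the core `X` into the shrinking adjunction space. -/
def inclX : C(X, ShrAdj X A x a) :=
  ⟨fun z => ⟨fun _ => Quot.mk _ (Sum.inl z), fun _ => rfl⟩, by
    apply Continuous.subtype_mk
    exact continuous_pi fun k => continuous_quot_mk.comp continuous_inl⟩

/-- Canonical inclusion of the attachment space `A j`. -/
def inclA (j : ℕ) : C(A j, ShrAdj X A x a) :=
  ⟨fun b => ⟨fun _ => Quot.mk _ (Sum.inr ⟨j, b⟩), fun _ => rfl⟩, by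
    apply Continuous.subtype_mk
    exact continuous_pi fun k => continuous_quot_mk.comp (continuous_inr.comp continuous_sigmaMk)⟩

/-- The map on the carrier which collapses every attachment space to its attachment point. -/
def coreMap : (X ⊕ Σ j : ℕ, A j) → X := Sum.elim id fun p => x p.1

theorem coreMap_rel (k : ℕ) :
    ∀ p q, rel X A x a k p q → coreMap X A x p = coreMap X A x q := by
  rintro p q ⟨j, b, -, ⟨rfl, rfl⟩ | ⟨rfl, rfl⟩⟩ <;> rfl

/-- The canonical retraction `r : Y → X` collapsing every `A j` to `x j`. -/
def retrCore : C(ShrAdj X A x a, X) :=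
  ⟨fun y => Quot.lift (coreMap X A x) (coreMap_rel X A x a 0) (y.1 0),
    (continuous_quot_lift _
        (continuous_id.sumElim (continuous_sigma fun i => (continuous_const : Continuous fun _ : A i => x i)))).comp
      ((continuous_apply 0).comp continuous_subtype_val)⟩

/-- The map on the carrier collapsing everything except the copy of `A j` to `a j`. -/
def projMap (j : ℕ) : (X ⊕ Σ i : ℕ, A i) → A j :=
  Sum.elim (fun _ => a j) fun p => if h : p.1 = j then h ▸ p.2 else a j

theorem projMap_rel (j : ℕ) :
    ∀ p q, rel X A x a (j + 1) p q → projMap X A a j p = projMap X A a j q := by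
  rintro p q ⟨i, b, hib, ⟨rfl, rfl⟩ | ⟨rfl, rfl⟩⟩ <;>
  · simp only [projMap, Sum.elim_inl, Sum.elim_inr]
    rcases eq_or_ne i j with rfl | h
    · rw [dif_pos rfl]
      first
      | exact (hib (Nat.lt_succ_self i))
      | exact (hib (Nat.lt_succ_self i)).symm
    · rw [dif_neg h]

theorem projMap_continuous (j : ℕ) : Continuous (projMap X A a j) := by
  refine Continuous.sumElim continuous_const (continuous_sigma fun i => ?_)
  rcases eq_or_ne i j with rfl | h
  · simp only [dif_pos rfl]
    exact continuous_id
  · simp only [dif_neg h]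
    exact continuous_const

/-- The canonical retraction `r_j : Y → A j` collapsing the rest of `Y` to `a j`. -/
def retrA (j : ℕ) : C(ShrAdj X A x a, A j) :=
  ⟨fun y => Quot.lift (projMap X A a j) (projMap_rel X A x a j) (y.1 (j + 1)),
    (continuous_quot_lift _ (projMap_continuous X A a j)).comp
      ((continuous_apply (j + 1)).comp continuous_subtype_val)⟩


end ShrinkingAdjunction

open ShrinkingAdjunction

/-- A Peano continuum: a compact, connected, locally path-connected metrizable space. -/
def IsPeanoContinuum (Z : Type*) [TopologicalSpace Z] : Prop :=
  CompactSpace Z ∧ ConnectedSpace Z ∧ LocPathConnectedSpace Z ∧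
    TopologicalSpace.MetrizableSpace Z

section SumLPC

universe u v

open Set

/-- Universe-polymorphic version of `Sum.locPathConnectedSpace`. -/
theorem sum_locPathConnectedSpace {X : Type u} {Y : Type v} [TopologicalSpace X]
    [TopologicalSpace Y] [LocallyPathConnectedSpace X] [LocallyPathConnectedSpace Y] :
    LocallyPathConnectedSpace (X ⊕ Y) := by
  rw [locPathConnectedSpace_iff_pathComponentIn_mem_nhds]; intro x u hu hxu; rw [mem_nhds_iff]
  obtain x | y := x
  · refine ⟨Sum.inl '' (pathComponentIn (Sum.inl ⁻¹' u) x), ?_, ?_, ?_⟩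
    · apply IsPathConnected.subset_pathComponentIn
      · exact (isPathConnected_pathComponentIn (by exact hxu)).image continuous_inl
      · exact ⟨x, mem_pathComponentIn_self hxu, rfl⟩
      · exact (image_mono pathComponentIn_subset).trans (u.image_preimage_subset _)
    · exact isOpenMap_inl _ <| (hu.preimage continuous_inl).pathComponentIn _
    · exact ⟨x, mem_pathComponentIn_self hxu, rfl⟩
  · refine ⟨Sum.inr '' (pathComponentIn (Sum.inr ⁻¹' u) y), ?_, ?_, ?_⟩
    · apply IsPathConnected.subset_pathComponentIn
      · exact (isPathConnected_pathComponentIn (by exact hxu)).image continuous_inr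
      · exact ⟨y, mem_pathComponentIn_self hxu, rfl⟩
      · exact (image_mono pathComponentIn_subset).trans (u.image_preimage_subset _)
    · exact isOpenMap_inr _ <| (hu.preimage continuous_inr).pathComponentIn _
    · exact ⟨y, mem_pathComponentIn_self hxu, rfl⟩

/-- A compact retract of a Peano continuum is a Peano continuum. -/
theorem isPeanoContinuum_of_retract {Z : Type u} {W : Type v} [TopologicalSpace Z]
    [TopologicalSpace W] [CompactSpace Z] (r : C(W, Z)) (i : C(Z, W))
    (hri : ∀ z, r (i z) = z) (hW : IsPeanoContinuum W) : IsPeanoContinuum Z := by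
  obtain ⟨hWc, hWconn, hWl, hWm⟩ := hW
  have hsurj : Function.Surjective r := fun z => ⟨i z, hri z⟩
  have hinj : Function.Injective i := fun z z' h => by rw [← hri z, ← hri z', h]
  refine ⟨‹_›, hsurj.connectedSpace r.continuous, ?_, ?_⟩
  · haveI : LocallyPathConnectedSpace W := hWl
    show LocallyPathConnectedSpace Z
    rw [locPathConnectedSpace_iff_pathComponentIn_mem_nhds]
    intro z u hu hzu
    obtain ⟨V, ⟨hV, hVpc⟩, hVsub⟩ :=
      (path_connected_basis (i z)).mem_iff.mp
        ((hu.preimage r.continuous).mem_nhds (show r (i z) ∈ u by rw [hri]; exact hzu))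
    have himg : r '' V ⊆ pathComponentIn u z := by
      apply (hVpc.image r.continuous).subset_pathComponentIn
      · exact ⟨i z, mem_of_mem_nhds hV, hri z⟩
      · exact (Set.image_mono hVsub).trans (Set.image_preimage_subset _ _)
    refine Filter.mem_of_superset
      (i.continuous.continuousAt.preimage_mem_nhds hV) (fun w hw => himg ⟨i w, hw, hri w⟩)
  · exact ((i.continuous.isClosedEmbedding hinj).toIsEmbedding).metrizableSpace

end SumLPC
namespace ShrinkingAdjunction

open Set Filter Topology

variable {X : Type*} [TopologicalSpace X] {A : ℕ → Type*} [∀ j, TopologicalSpace (A j)]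
  {x : ℕ → X} {a : ∀ j, A j}

theorem rel_mono {k k' : ℕ} (hk : k' ≤ k) {p q} (h : rel X A x a k p q) :
    rel X A x a k' p q := by
  obtain ⟨j, b, hj, hpq⟩ := h
  exact ⟨j, b, fun h' => hj (h'.trans_le hk), hpq⟩

/-- The bonding retraction from `Y_k` to `Y_{k'}` for `k' ≤ k`. -/
def down {k' k : ℕ} (hk : k' ≤ k) : FinAdj X A x a k → FinAdj X A x a k' :=
  Quot.lift (Quot.mk _) fun _ _ h => Quot.sound (rel_mono hk h)

theorem continuous_down {k' k : ℕ} (hk : k' ≤ k) :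
    Continuous (down (X := X) (A := A) (x := x) (a := a) hk) :=
  continuous_quot_lift _ continuous_quot_mk

theorem bond_eq_down (k : ℕ) (q : FinAdj X A x a (k + 1)) :
    bond X A x a k q = down (Nat.le_succ k) q := by
  induction q using Quot.ind; rfl

theorem down_down {k1 k2 k3 : ℕ} (h12 : k1 ≤ k2) (h23 : k2 ≤ k3) (q : FinAdj X A x a k3) :
    down h12 (down h23 q) = down (h12.trans h23) q := by
  induction q using Quot.ind; rfl

theorem proj_down (y : ShrAdj X A x a) {k' k : ℕ} (hk : k' ≤ k) :
    y.1 k' = down hk (y.1 k) := by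
  induction k, hk using Nat.le_induction with
  | base =>
    have : ∀ q : FinAdj X A x a k', down (le_refl k') q = q := fun q => by
      induction q using Quot.ind; rfl
    exact (this _).symm
  | succ k hk ih =>
    calc y.1 k' = down hk (y.1 k) := ih
      _ = down hk (down (Nat.le_succ k) (y.1 (k + 1))) := by rw [← bond_eq_down, y.2 k]
      _ = down (hk.trans (Nat.le_succ k)) (y.1 (k + 1)) := down_down _ _ _

/-- The collapse-to-core map on `Y_k`. -/
def core (k : ℕ) : FinAdj X A x a k → X :=
  Quot.lift (coreMap X A x) (coreMap_rel X A x a k)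

theorem core_down {k' k : ℕ} (hk : k' ≤ k) (q : FinAdj X A x a k) :
    core k' (down hk q) = core k q := by
  induction q using Quot.ind; rfl

theorem retrCore_eq (y : ShrAdj X A x a) (k : ℕ) :
    retrCore X A x a y = core k (y.1 k) := by
  show core 0 (y.1 0) = core k (y.1 k)
  rw [proj_down y (Nat.zero_le k), core_down]

/-- The collapse-to-`A j` map on `Y_k` for `j < k`. -/
def pr (j k : ℕ) (h : j < k) : FinAdj X A x a k → A j :=
  Quot.lift (projMap X A a j) fun p q hr => projMap_rel X A x a j p q (rel_mono h hr)

theorem pr_down {j k' k : ℕ} (h : j < k') (hk : k' ≤ k) (q : FinAdj X A x a k) :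
    pr j k' h (down hk q) = pr j k (h.trans_le hk) q := by
  induction q using Quot.ind; rfl

theorem retrA_eq (y : ShrAdj X A x a) {j k : ℕ} (h : j < k) :
    retrA X A x a j y = pr j k h (y.1 k) := by
  show pr j (j + 1) (Nat.lt_succ_self j) (y.1 (j + 1)) = pr j k h (y.1 k)
  rw [proj_down y h, pr_down]

theorem projMap_inl (j : ℕ) (z : X) : projMap X A a j (Sum.inl z) = a j := rfl

theorem projMap_inr_self (j : ℕ) (b : A j) :
    projMap X A a j (Sum.inr ⟨j, b⟩) = b := by simp [projMap]

theorem projMap_inr_ne {i j : ℕ} (h : i ≠ j) (b : A i) :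
    projMap X A a j (Sum.inr ⟨i, b⟩) = a j := by simp [projMap, h]

theorem fa_inr {k j : ℕ} (b : A j) (h : j < k → b = a j) :
    (Quot.mk (rel X A x a k) (Sum.inr ⟨j, b⟩)) = Quot.mk (rel X A x a k) (Sum.inl (x j)) :=
  Quot.sound ⟨j, b, h, Or.inr ⟨rfl, rfl⟩⟩

theorem fa_eq_iff {k : ℕ} {p q : X ⊕ Σ j : ℕ, A j} :
    Quot.mk (rel X A x a k) p = Quot.mk (rel X A x a k) q ↔
      coreMap X A x p = coreMap X A x q ∧
        ∀ j, j < k → projMap X A a j p = projMap X A a j q := by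
  constructor
  · intro h
    exact ⟨congrArg (core k) h, fun j hj => congrArg (pr j k hj) h⟩
  · rintro ⟨hc, hp⟩
    rcases p with z | ⟨i, b⟩ <;> rcases q with z' | ⟨i', b'⟩
    · rw [show z = z' from hc]
    · rw [show z = x i' from hc]
      exact (fa_inr b' fun hjk => by
        have := hp i' hjk
        rw [projMap_inl, projMap_inr_self] at this
        exact this.symm).symm
    · rw [show z' = x i from hc.symm]
      exact fa_inr b fun hjk => by
        have := hp i hjk
        rwa [projMap_inl, projMap_inr_self] at this
    · rcases eq_or_ne i i' with rfl | hii
      · by_cases hik : i < k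
        · have hb : b = b' := by
            have := hp i hik
            rwa [projMap_inr_self, projMap_inr_self] at this
          rw [hb]
        · exact (fa_inr b fun h => absurd h hik).trans
            (fa_inr b' fun h => absurd h hik).symm
      · have hxx : x i = x i' := hc
        have h1 := fa_inr (x := x) (a := a) (k := k) b (fun hik => by
          have := hp i hik
          rwa [projMap_inr_self, projMap_inr_ne (Ne.symm hii)] at this)
        have h2 := fa_inr (x := x) (a := a) (k := k) b' (fun hik => by
          have := hp i' hik
          rw [projMap_inr_ne hii, projMap_inr_self] at this
          exact this.symm)
        rw [h1, h2, hxx]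

theorem exists_rep {k : ℕ} (q : FinAdj X A x a k) :
    ∃ p, q = Quot.mk (rel X A x a k) p :=
  (Quot.exists_rep q).imp fun _ h => h.symm

theorem projMap_eq_of_ne {j : ℕ} {p : X ⊕ Σ i : ℕ, A i}
    (h : projMap X A a j p ≠ a j) : p = Sum.inr ⟨j, projMap X A a j p⟩ := by
  rcases p with z | ⟨i, b⟩
  · exact absurd rfl h
  · rcases eq_or_ne i j with rfl | hij
    · rw [projMap_inr_self]
    · exact absurd (projMap_inr_ne hij b) h

theorem inclA_a (j : ℕ) : inclA X A x a j (a j) = inclX X A x a (x j) :=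
  Subtype.ext (funext fun _ => Quot.sound ⟨j, a j, fun _ => rfl, Or.inr ⟨rfl, rfl⟩⟩)

theorem classify (y : ShrAdj X A x a) :
    (∃ z, y = inclX X A x a z) ∨ ∃ j b, y = inclA X A x a j b := by
  by_cases hA : ∀ j, retrA X A x a j y = a j
  · left
    refine ⟨retrCore X A x a y, Subtype.ext (funext fun k => ?_)⟩
    obtain ⟨p, hp⟩ := exists_rep (y.1 k)
    show y.1 k = Quot.mk _ (Sum.inl (retrCore X A x a y))
    rw [hp]; apply fa_eq_iff.mpr
    refine ⟨?_, fun j hj => ?_⟩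
    · show coreMap X A x p = retrCore X A x a y
      rw [retrCore_eq y k, hp]; rfl
    · show projMap X A a j p = projMap X A a j (Sum.inl _)
      rw [projMap_inl, ← hA j, retrA_eq y hj, hp]; rfl
  · right
    push_neg at hA
    obtain ⟨j, hj⟩ := hA
    refine ⟨j, retrA X A x a j y, Subtype.ext (funext fun k => ?_)⟩
    have key : ∀ k, j < k →
        y.1 k = Quot.mk (rel X A x a k) (Sum.inr ⟨j, retrA X A x a j y⟩) := by
      intro k h
      obtain ⟨p, hp⟩ := exists_rep (y.1 k)
      have hproj : projMap X A a j p = retrA X A x a j y := by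
        rw [retrA_eq y h, hp]; rfl
      have hne : projMap X A a j p ≠ a j := by rw [hproj]; exact hj
      rw [hp, projMap_eq_of_ne hne, hproj]
    show y.1 k = Quot.mk _ (Sum.inr ⟨j, retrA X A x a j y⟩)
    rcases lt_or_ge j k with h | h
    · exact key k h
    · have hk : k ≤ j + 1 := h.trans (Nat.le_succ j)
      rw [proj_down y hk, key (j + 1) (Nat.lt_succ_self j)]
      rfl

end ShrinkingAdjunction
namespace ShrinkingAdjunction

open Set Filter Topology

variable {X : Type*} [TopologicalSpace X] {A : ℕ → Type*} [∀ j, TopologicalSpace (A j)]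
  {x : ℕ → X} {a : ∀ j, A j}

theorem continuous_coreMap : Continuous (coreMap X A x) :=
  continuous_id.sumElim (continuous_sigma fun i => (continuous_const : Continuous fun _ : A i => x i))

/-- The canonical continuous injection of `Y_k` into `X × ∏ j, A j`. -/
def phiF (k : ℕ) : FinAdj X A x a k → X × ∀ j, A j := fun q =>
  (core k q, fun j => if h : j < k then pr j k h q else a j)

theorem continuous_phiF (k : ℕ) :
    Continuous (phiF (X := X) (A := A) (x := x) (a := a) k) := by
  refine (continuous_quot_lift _ continuous_coreMap).prodMk (continuous_pi fun j => ?_)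
  by_cases h : j < k
  · simp only [dif_pos h]
    exact continuous_quot_lift _ (projMap_continuous X A a j)
  · simp only [dif_neg h]
    exact continuous_const

theorem injective_phiF (k : ℕ) :
    Function.Injective (phiF (X := X) (A := A) (x := x) (a := a) k) := by
  intro q1 q2 h
  obtain ⟨p1, rfl⟩ := exists_rep q1
  obtain ⟨p2, rfl⟩ := exists_rep q2
  apply fa_eq_iff.mpr
  refine ⟨congrArg Prod.fst h, fun j hj => ?_⟩
  have := congrFun (congrArg Prod.snd h) j
  simp only [phiF, dif_pos hj] at this
  exact this

theorem t2Space_finAdj [T2Space X] [∀ j, T2Space (A j)] (k : ℕ) :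
    T2Space (FinAdj X A x a k) :=
  T2Space.of_injective_continuous (injective_phiF k) (continuous_phiF k)

theorem compactSpace_finAdj [CompactSpace X] [∀ j, CompactSpace (A j)] (k : ℕ) :
    CompactSpace (FinAdj X A x a k) := by
  let g : (X ⊕ Σ j : Fin k, A j) → FinAdj X A x a k :=
    Sum.elim (fun z => Quot.mk _ (Sum.inl z))
      (fun p => Quot.mk _ (Sum.inr ⟨(p.1 : ℕ), p.2⟩))
  have hcont : Continuous g :=
    (continuous_quot_mk.comp continuous_inl).sumElim
      (continuous_sigma fun i =>
        continuous_quot_mk.comp (continuous_inr.comp continuous_sigmaMk))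
  have hsurj : Function.Surjective g := by
    intro q
    obtain ⟨p, rfl⟩ := exists_rep q
    rcases p with z | ⟨j, b⟩
    · exact ⟨Sum.inl z, rfl⟩
    · by_cases h : j < k
      · exact ⟨Sum.inr ⟨⟨j, h⟩, b⟩, rfl⟩
      · exact ⟨Sum.inl (x j), (fa_inr b fun hh => absurd hh h).symm⟩
  exact ⟨hsurj.range_eq ▸ isCompact_range hcont⟩

/-- The canonical continuous section of the projection `Y → Y_N`. -/
def sec (N : ℕ) : FinAdj X A x a N → ShrAdj X A x a :=
  Quot.lift
    (Sum.elim (fun z => inclX X A x a z)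
      (fun p => if h : p.1 < N then inclA X A x a p.1 p.2 else inclX X A x a (x p.1)))
    (by
      have key : ∀ (j : ℕ) (b : A j), (j < N → b = a j) →
          (if h : j < N then inclA X A x a j b else inclX X A x a (x j)) =
            inclX X A x a (x j) := by
        intro j b hb
        by_cases h : j < N
        · rw [dif_pos h, hb h, inclA_a]
        · rw [dif_neg h]
      rintro p q ⟨j, b, hb, ⟨rfl, rfl⟩ | ⟨rfl, rfl⟩⟩
      · exact (key j b hb).symm
      · exact key j b hb)

theorem continuous_sec (N : ℕ) :
    Continuous (sec (X := X) (A := A) (x := x) (a := a) N) := by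
  refine continuous_quot_lift _ ((inclX X A x a).continuous.sumElim
    (continuous_sigma fun j => ?_))
  by_cases h : j < N
  · simp only [dif_pos h]
    exact (inclA X A x a j).continuous
  · simp only [dif_neg h]
    exact continuous_const

theorem sec_proj (N : ℕ) (q : FinAdj X A x a N) : (sec N q).1 N = q := by
  obtain ⟨p, rfl⟩ := exists_rep q
  rcases p with z | ⟨j, b⟩
  · rfl
  · show ((if h : j < N then inclA X A x a j b else inclX X A x a (x j)) :
      ShrAdj X A x a).1 N = _
    by_cases h : j < N
    · rw [dif_pos h]
      rfl
    · rw [dif_neg h]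
      exact (fa_inr b fun hh => absurd hh h).symm

theorem joined_fiber (N : ℕ) (hpA : ∀ j, PathConnectedSpace (A j)) (y : ShrAdj X A x a) :
    JoinedIn {y' : ShrAdj X A x a | y'.1 N = y.1 N} y (sec N (y.1 N)) := by
  rcases classify y with ⟨z, rfl⟩ | ⟨j, b, rfl⟩
  · have h : sec N ((inclX X A x a z).1 N) = inclX X A x a z := rfl
    rw [h]
    exact JoinedIn.refl rfl
  · by_cases hjN : j < N
    · have h : sec N ((inclA X A x a j b).1 N) = inclA X A x a j b := by
        show (if h : j < N then inclA X A x a j b else inclX X A x a (x j)) = _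
        rw [dif_pos hjN]
      rw [h]
      exact JoinedIn.refl rfl
    · have h : sec N ((inclA X A x a j b).1 N) = inclA X A x a j (a j) := by
        show (if h : j < N then inclA X A x a j b else inclX X A x a (x j)) = _
        rw [dif_neg hjN, inclA_a]
      rw [h]
      haveI := hpA j
      obtain ⟨γ⟩ : Joined b (a j) := PathConnectedSpace.joined b (a j)
      refine ⟨γ.map (inclA X A x a j).continuous, fun t => ?_⟩
      show (inclA X A x a j (γ t)).1 N = (inclA X A x a j b).1 N
      exact (fa_inr (γ t) fun hh => absurd hh hjN).trans
        (fa_inr b fun hh => absurd hh hjN).symm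

theorem isPathConnected_preimage (N : ℕ) (hpA : ∀ j, PathConnectedSpace (A j))
    {P : Set (FinAdj X A x a N)} (hP : IsPathConnected P) :
    IsPathConnected {y : ShrAdj X A x a | y.1 N ∈ P} := by
  obtain ⟨q0, hq0, hjoin⟩ := hP
  refine ⟨sec N q0, by show (sec N q0).1 N ∈ P; rw [sec_proj]; exact hq0, ?_⟩
  intro y hy
  have J1 : JoinedIn {y' : ShrAdj X A x a | y'.1 N ∈ P} y (sec N (y.1 N)) :=
    (joined_fiber N hpA y).mono fun y' h => by
      rw [mem_setOf_eq] at h ⊢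
      rw [h]; exact hy
  have J2' : JoinedIn {y' : ShrAdj X A x a | y'.1 N ∈ P} (sec N (y.1 N)) (sec N q0) := by
    obtain ⟨γ, hγ⟩ := (hjoin hy).symm
    exact ⟨γ.map (continuous_sec N), fun t => by
      show (sec N (γ t)).1 N ∈ P
      rw [sec_proj]; exact hγ t⟩
  exact (J1.trans J2').symm

theorem exists_basic_nhd (y : ShrAdj X A x a) (U : Set (ShrAdj X A x a)) (hU : U ∈ 𝓝 y) :
    ∃ N, ∃ O : Set (FinAdj X A x a N), IsOpen O ∧ y.1 N ∈ O ∧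
      {y' : ShrAdj X A x a | y'.1 N ∈ O} ⊆ U := by
  obtain ⟨t, ht, htU⟩ := mem_nhds_induced Subtype.val y U |>.mp hU
  rw [nhds_pi] at ht
  obtain ⟨I, s', hs', hsub⟩ := Filter.mem_pi'.mp ht
  choose O hOsub hOopen hOmem using fun k => mem_nhds_iff.mp (hs' k)
  set N := I.sup id with hN
  let D : ∀ k, FinAdj X A x a N → FinAdj X A x a k := fun k =>
    if h : k ≤ N then down h else fun _ => @id (FinAdj X A x a k) (Quot.mk _ (Sum.inl (x 0)))
  have hD : ∀ k (h : k ≤ N) (y' : ShrAdj X A x a), D k (y'.1 N) = y'.1 k := by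
    intro k h y'
    simp only [D]; rw [dif_pos h]
    exact (proj_down y' h).symm
  have hDcont : ∀ k, Continuous (D k) := by
    intro k
    by_cases h : k ≤ N
    · simp only [D]; rw [dif_pos h]; exact continuous_down h
    · simp only [D]; rw [dif_neg h]; exact continuous_const
  refine ⟨N, ⋂ k ∈ I, D k ⁻¹' O k, ?_, ?_, ?_⟩
  · exact Set.Finite.isOpen_biInter I.finite_toSet fun k _ => (hOopen k).preimage (hDcont k)
  · refine Set.mem_biInter fun k hk => ?_
    show D k (y.1 N) ∈ O k
    rw [hD k (Finset.le_sup (f := id) hk) y]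
    exact hOmem k
  · intro y' hy'
    refine htU ?_
    refine hsub ?_
    intro k hk
    have hkN : k ≤ N := Finset.le_sup (f := id) hk
    have hmem : D k (y'.1 N) ∈ O k := by
      have := Set.mem_iInter₂.mp hy' k hk
      exact this
    rw [hD k hkN y'] at hmem
    exact hOsub k hmem

end ShrinkingAdjunction
namespace ShrinkingAdjunction

open Set Filter Topology

variable {X : Type*} [TopologicalSpace X] {A : ℕ → Type*} [∀ j, TopologicalSpace (A j)]
  {x : ℕ → X} {a : ∀ j, A j}

theorem locPathConnectedSpace_shrAdj [LocallyPathConnectedSpace X]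
    (hlA : ∀ j, LocPathConnectedSpace (A j)) (hpA : ∀ j, PathConnectedSpace (A j)) :
    LocallyPathConnectedSpace (ShrAdj X A x a) := by
  haveI : ∀ j, LocallyPathConnectedSpace (A j) := hlA
  haveI : LocallyPathConnectedSpace (X ⊕ Σ j : ℕ, A j) := sum_locPathConnectedSpace
  haveI : ∀ N, LocallyPathConnectedSpace (FinAdj X A x a N) := fun N =>
    Quot.locPathConnectedSpace
  rw [locPathConnectedSpace_iff_pathComponentIn_mem_nhds]
  intro y u hu hyu
  obtain ⟨N, O, hOopen, hOmem, hOsub⟩ := exists_basic_nhd y u (hu.mem_nhds hyu)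
  obtain ⟨P, ⟨hPn, hPpc⟩, hPO⟩ :=
    (path_connected_basis (y.1 N)).mem_iff.mp (hOopen.mem_nhds hOmem)
  have hproj : Continuous fun y' : ShrAdj X A x a => y'.1 N :=
    (continuous_apply N).comp continuous_subtype_val
  have hpre : {y' : ShrAdj X A x a | y'.1 N ∈ P} ∈ 𝓝 y :=
    hproj.continuousAt.preimage_mem_nhds hPn
  refine Filter.mem_of_superset hpre ?_
  refine IsPathConnected.subset_pathComponentIn (isPathConnected_preimage N hpA hPpc)
    (show y.1 N ∈ P from mem_of_mem_nhds hPn) ?_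
  exact fun y' hy' => hOsub (hPO hy')

theorem pathConnectedSpace_shrAdj [PathConnectedSpace X]
    (hpA : ∀ j, PathConnectedSpace (A j)) : PathConnectedSpace (ShrAdj X A x a) := by
  rw [pathConnectedSpace_iff_univ]
  have h0 : PathConnectedSpace (FinAdj X A x a 0) := by
    have hsurj : Function.Surjective
        (fun z : X => (Quot.mk (rel X A x a 0) (Sum.inl z))) := by
      intro q
      obtain ⟨p, rfl⟩ := exists_rep q
      rcases p with z | ⟨j, b⟩
      · exact ⟨z, rfl⟩
      · exact ⟨x j, (fa_inr b fun hh => absurd hh (Nat.not_lt_zero j)).symm⟩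
    exact hsurj.pathConnectedSpace (continuous_quot_mk.comp continuous_inl)
  have huniv : IsPathConnected (univ : Set (FinAdj X A x a 0)) :=
    pathConnectedSpace_iff_univ.mp h0
  have h := isPathConnected_preimage 0 hpA huniv
  simpa using h

end ShrinkingAdjunction
/-- A shrinking adjunction space built from compact Hausdorff pieces is a Peano continuum
if and only if the core `X` and each attachment space `A j` are Peano continua. -/
theorem isPeanoContinuum_shrAdj_iff (X : Type*) [TopologicalSpace X]
    (A : ℕ → Type*) [∀ j, TopologicalSpace (A j)] (x : ℕ → X) (a : ∀ j, A j)
    [T2Space X] [∀ j, T2Space (A j)] [CompactSpace X] [∀ j, CompactSpace (A j)] :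
    IsPeanoContinuum (ShrAdj X A x a) ↔
      (IsPeanoContinuum X ∧ ∀ j, IsPeanoContinuum (A j)) := by
  constructor
  · intro h
    refine ⟨isPeanoContinuum_of_retract (retrCore X A x a) (inclX X A x a)
        (fun z => rfl) h,
      fun j => isPeanoContinuum_of_retract (retrA X A x a j) (inclA X A x a j)
        (fun b => ?_) h⟩
    show projMap X A a j (Sum.inr ⟨j, b⟩) = b
    exact projMap_inr_self j b
  · rintro ⟨⟨hXc, hXconn, hXl, hXm⟩, hA⟩
    haveI := hXconn; haveI : LocallyPathConnectedSpace X := hXl; haveI := hXm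
    have hAc : ∀ j, ConnectedSpace (A j) := fun j => (hA j).2.1
    have hAl : ∀ j, LocPathConnectedSpace (A j) := fun j => (hA j).2.2.1
    haveI hAm : ∀ j, TopologicalSpace.MetrizableSpace (A j) := fun j => (hA j).2.2.2
    have hpA : ∀ j, PathConnectedSpace (A j) := fun j => by
      haveI := hAc j; haveI : LocallyPathConnectedSpace (A j) := hAl j
      exact pathConnectedSpace_iff_connectedSpace.mpr (hAc j)
    haveI : ∀ k, CompactSpace (FinAdj X A x a k) := compactSpace_finAdj
    haveI : ∀ k, T2Space (FinAdj X A x a k) := t2Space_finAdj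
    -- compactness
    have hcl : IsClosed {y : ∀ k, FinAdj X A x a k |
        ∀ k, bond X A x a k (y (k + 1)) = y k} := by
      have he : {y : ∀ k, FinAdj X A x a k | ∀ k, bond X A x a k (y (k + 1)) = y k} =
          ⋂ k, {y : ∀ k, FinAdj X A x a k | bond X A x a k (y (k + 1)) = y k} := by
        ext y; simp [Set.mem_iInter]
      rw [he]
      exact isClosed_iInter fun k => isClosed_eq
        ((continuous_quot_lift _ continuous_quot_mk : Continuous (bond X A x a k)).comp (continuous_apply (k + 1)))
        (continuous_apply k)
    haveI hYc : CompactSpace (ShrAdj X A x a) := isCompact_iff_compactSpace.mp hcl.isCompact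
    haveI hXp : PathConnectedSpace X := pathConnectedSpace_iff_connectedSpace.mpr hXconn
    haveI hYpc : PathConnectedSpace (ShrAdj X A x a) := pathConnectedSpace_shrAdj hpA
    refine ⟨hYc, inferInstance, locPathConnectedSpace_shrAdj hAl hpA, ?_⟩
    -- metrizability
    let Φ : ShrAdj X A x a → X × ∀ j, A j :=
      fun y => (retrCore X A x a y, fun j => retrA X A x a j y)
    have hΦc : Continuous Φ :=
      (retrCore X A x a).continuous.prodMk
        (continuous_pi fun j => (retrA X A x a j).continuous)
    have hΦi : Function.Injective Φ := by
      intro y1 y2 h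
      have hc : retrCore X A x a y1 = retrCore X A x a y2 := congrArg Prod.fst h
      have hp : ∀ j, retrA X A x a j y1 = retrA X A x a j y2 := fun j =>
        congrFun (congrArg Prod.snd h) j
      apply Subtype.ext; funext k
      obtain ⟨p1, h1⟩ := exists_rep (y1.1 k)
      obtain ⟨p2, h2⟩ := exists_rep (y2.1 k)
      rw [h1, h2]; apply fa_eq_iff.mpr
      constructor
      · have := hc
        rw [retrCore_eq y1 k, retrCore_eq y2 k, h1, h2] at this
        exact this
      · intro j hj
        have := hp j
        rw [retrA_eq y1 hj, retrA_eq y2 hj, h1, h2] at this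
        exact this
    exact ((hΦc.isClosedEmbedding hΦi).toIsEmbedding).metrizableSpace
end

section
/- Let p : X̃ → X be a generalized covering map. Then for every n ≥ 2, the induced homomorphism p_# : π_n(X̃, x̃₀) → π_n(X, x₀) is an isomorphism, and p_# : π_1(X̃, x̃₀) → π_1(X, x₀) is injective. -/
open Set Topology

universe u

/-- `p : E → X` is a **generalized covering map**: `E` is nonempty, path connected and locally
path connected, and for every map `f : (Y, y) → (X, x)` from a path-connected, locally
path-connected space and every `e ∈ p⁻¹(x)` such that `f_#(π₁(Y,y)) ≤ p_#(π₁(E,e))` (every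
loop `f ∘ γ` is path-homotopic to some `p ∘ δ`), there is a unique based lift of `f`. -/
def IsGenCoveringMap {E X : Type u} [TopologicalSpace E] [TopologicalSpace X]
    (p : C(E, X)) : Prop :=
  Nonempty E ∧ PathConnectedSpace E ∧ LocallyPathConnectedSpace E ∧
  ∀ (Y : Type u) [TopologicalSpace Y] [PathConnectedSpace Y] [LocallyPathConnectedSpace Y]
    (y : Y) (f : C(Y, X)) (e : E) (hfy : f y = p e),
    (∀ γ : Path y y, ∃ δ : Path e e,
      (δ.map p.continuous).Homotopic ((γ.map f.continuous).cast hfy.symm hfy.symm)) →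
    ∃! g : C(Y, E), p.comp g = f ∧ g y = e

open scoped Topology.Homotopy

namespace GenCovAux

instance : ContractibleSpace unitInterval :=
  (convex_Icc (0:ℝ) 1).contractibleSpace (Set.nonempty_Icc.mpr zero_le_one)

instance piPathConn {ι : Type*} {Xs : ι → Type*} [∀ i, TopologicalSpace (Xs i)]
    [∀ i, PathConnectedSpace (Xs i)] : PathConnectedSpace (∀ i, Xs i) where
  nonempty := ⟨fun _ => Classical.choice PathConnectedSpace.nonempty⟩
  joined := fun x y => ⟨Path.pi fun i => PathConnectedSpace.somePath (x i) (y i)⟩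

instance prodPathConn {A B : Type*} [TopologicalSpace A] [TopologicalSpace B]
    [PathConnectedSpace A] [PathConnectedSpace B] : PathConnectedSpace (A × B) where
  nonempty := ⟨(Classical.choice PathConnectedSpace.nonempty,
    Classical.choice PathConnectedSpace.nonempty)⟩
  joined := fun x y => ⟨(PathConnectedSpace.somePath x.1 y.1).prod
    (PathConnectedSpace.somePath x.2 y.2)⟩

attribute [local instance] Path.Homotopic.setoid

instance piSimplyConn {ι : Type*} {Xs : ι → Type*} [∀ i, TopologicalSpace (Xs i)]
    [∀ i, SimplyConnectedSpace (Xs i)] : SimplyConnectedSpace (∀ i, Xs i) := by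
  rw [simply_connected_iff_paths_homotopic']
  refine ⟨inferInstance, ?_⟩
  intro x y p₁ p₂
  refine Quotient.exact (?_ : (⟦p₁⟧ : Path.Homotopic.Quotient x y) = ⟦p₂⟧)
  rw [← Path.Homotopic.pi_proj ⟦p₁⟧, ← Path.Homotopic.pi_proj ⟦p₂⟧]
  congr 1
  funext i
  exact Subsingleton.elim _ _

instance prodSimplyConn {A B : Type*} [TopologicalSpace A] [TopologicalSpace B]
    [SimplyConnectedSpace A] [SimplyConnectedSpace B] : SimplyConnectedSpace (A × B) := by
  rw [simply_connected_iff_paths_homotopic']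
  refine ⟨inferInstance, ?_⟩
  intro x y p₁ p₂
  obtain ⟨x₁, x₂⟩ := x; obtain ⟨y₁, y₂⟩ := y
  refine Quotient.exact (?_ : (⟦p₁⟧ : Path.Homotopic.Quotient _ _) = ⟦p₂⟧)
  rw [← Path.Homotopic.prod_projLeft_projRight ⟦p₁⟧,
    ← Path.Homotopic.prod_projLeft_projRight ⟦p₂⟧]
  congr 1 <;> exact Subsingleton.elim _ _

theorem locPathConnectedSpace_of_retract {Z Y : Type*} [TopologicalSpace Z]
    [TopologicalSpace Y] [LocallyPathConnectedSpace Z] {r : Z → Y} {s : Y → Z}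
    (hr : Continuous r) (hs : Continuous s) (h : Function.LeftInverse r s) :
    LocallyPathConnectedSpace Y :=
  (Topology.IsQuotientMap.of_inverse hs hr h).locPathConnectedSpace

instance : LocallyPathConnectedSpace unitInterval :=
  locPathConnectedSpace_of_retract (Z := ℝ) (r := projIcc 0 1 zero_le_one)
    (s := Subtype.val) continuous_projIcc continuous_subtype_val
    (fun x => projIcc_val zero_le_one x)

instance (m : ℕ) : LocallyPathConnectedSpace (Fin m → unitInterval) :=
  locPathConnectedSpace_of_retract (Z := Fin m → ℝ)
    (r := fun x i => projIcc 0 1 zero_le_one (x i)) (s := fun y i => (y i : ℝ))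
    (continuous_pi fun i => continuous_projIcc.comp (continuous_apply i))
    (continuous_pi fun i => continuous_subtype_val.comp (continuous_apply i))
    (fun y => funext fun i => projIcc_val zero_le_one (y i))

instance (m : ℕ) : LocallyPathConnectedSpace (unitInterval × (Fin m → unitInterval)) :=
  locPathConnectedSpace_of_retract (Z := ℝ × (Fin m → ℝ))
    (r := fun z => (projIcc 0 1 zero_le_one z.1, fun i => projIcc 0 1 zero_le_one (z.2 i)))
    (s := fun y => ((y.1 : ℝ), fun i => (y.2 i : ℝ)))
    ((continuous_projIcc.comp continuous_fst).prodMk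
      (continuous_pi fun i => continuous_projIcc.comp ((continuous_apply i).comp continuous_snd)))
    ((continuous_subtype_val.comp continuous_fst).prodMk
      (continuous_pi fun i => continuous_subtype_val.comp ((continuous_apply i).comp continuous_snd)))
    (fun y => Prod.ext (projIcc_val zero_le_one y.1)
      (funext fun i => projIcc_val zero_le_one (y.2 i)))

instance : LocallyPathConnectedSpace (unitInterval × unitInterval) :=
  locPathConnectedSpace_of_retract (Z := ℝ × ℝ)
    (r := fun z => (projIcc 0 1 zero_le_one z.1, projIcc 0 1 zero_le_one z.2))
    (s := fun y => ((y.1 : ℝ), (y.2 : ℝ)))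
    ((continuous_projIcc.comp continuous_fst).prodMk (continuous_projIcc.comp continuous_snd))
    ((continuous_subtype_val.comp continuous_fst).prodMk
      (continuous_subtype_val.comp continuous_snd))
    (fun y => Prod.ext (projIcc_val zero_le_one y.1) (projIcc_val zero_le_one y.2))

instance uliftPathConn (Y : Type) [TopologicalSpace Y] [PathConnectedSpace Y] :
    PathConnectedSpace (ULift.{u} Y) :=
  (Homeomorph.ulift (X := Y)).symm.surjective.pathConnectedSpace
    (Homeomorph.continuous _)

instance uliftLocPathConn (Y : Type) [TopologicalSpace Y] [LocallyPathConnectedSpace Y] :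
    LocallyPathConnectedSpace (ULift.{u} Y) :=
  locPathConnectedSpace_of_retract (r := ULift.up) (s := ULift.down)
    (Homeomorph.ulift (X := Y)).symm.continuous (Homeomorph.ulift (X := Y)).continuous
    (fun _ => rfl)

variable {E X : Type u} [TopologicalSpace E] [TopologicalSpace X] {p : C(E, X)}

theorem lift_unique (hp : IsGenCoveringMap p) {Y : Type} [TopologicalSpace Y]
    [PathConnectedSpace Y] [LocallyPathConnectedSpace Y] (y : Y) (g₁ g₂ : C(Y, E))
    (h : ∀ z, p (g₁ z) = p (g₂ z)) (hy : g₁ y = g₂ y) : g₁ = g₂ := by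
  obtain ⟨-, -, -, hlift⟩ := hp
  set dn : C(ULift.{u} Y, Y) := ⟨ULift.down, (Homeomorph.ulift (X := Y)).continuous⟩ with hdn
  set g₁' := g₁.comp dn with hg₁'
  set g₂' := g₂.comp dn with hg₂'
  have key := hlift (ULift.{u} Y) (ULift.up y) (p.comp g₁') (g₁ y) rfl ?_
  · obtain ⟨g, _, hgu⟩ := key
    have e1 : g₁' = g := hgu g₁' ⟨rfl, rfl⟩
    have e2 : g₂' = g := hgu g₂' ⟨by ext z; exact (h _).symm, hy.symm⟩
    ext z
    exact congrArg (fun k => ContinuousMap.toFun k (ULift.up z)) (e1.trans e2.symm)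
  · intro γ
    refine ⟨γ.map g₁'.continuous, ?_⟩
    have : (γ.map g₁'.continuous).map p.continuous
        = (γ.map (p.comp g₁').continuous).cast rfl rfl := by
      exact Path.ext rfl
    rw [this]

theorem lift_exists (hp : IsGenCoveringMap p) {Y : Type} [TopologicalSpace Y]
    [LocallyPathConnectedSpace Y] [SimplyConnectedSpace Y]
    (y : Y) (f : C(Y, X)) (e : E) (hfy : f y = p e) :
    ∃ g : C(Y, E), p.comp g = f ∧ g y = e := by
  obtain ⟨-, -, -, hlift⟩ := hp
  set dn : C(ULift.{u} Y, Y) := ⟨ULift.down, (Homeomorph.ulift (X := Y)).continuous⟩ with hdn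
  set f' := f.comp dn with hf'
  have hf'y : f' (ULift.up y) = p e := hfy
  have key := hlift (ULift.{u} Y) (ULift.up y) f' e hf'y ?_
  · obtain ⟨g, ⟨hg1, hg2⟩, -⟩ := key
    refine ⟨g.comp ⟨ULift.up, (Homeomorph.ulift (X := Y)).symm.continuous⟩, ?_, hg2⟩
    ext z
    exact ContinuousMap.congr_fun hg1 (ULift.up z)
  · intro γ
    refine ⟨Path.refl e, ?_⟩
    obtain ⟨Hm⟩ := (SimplyConnectedSpace.paths_homotopic (γ.map dn.continuous)
      (Path.refl y)).map f
    have h0 : ((Path.refl y).map f.continuous).toContinuousMap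
        = ((Path.refl e).map p.continuous).toContinuousMap := by
      ext t; simp [hfy]
    have h1 : ((γ.map dn.continuous).map f.continuous).toContinuousMap
        = ((γ.map f'.continuous).cast hf'y.symm hf'y.symm).toContinuousMap := by
      ext t; rfl
    exact ⟨ContinuousMap.HomotopyRel.cast Hm.symm h0 h1⟩

theorem const_path (hp : IsGenCoveringMap p) (φ : C(unitInterval, E))
    (h : ∀ t, p (φ t) = p (φ 0)) : ∀ t, φ t = φ 0 := by
  have := lift_unique hp (0 : unitInterval) φ (ContinuousMap.const _ (φ 0)) h rfl
  intro t
  exact ContinuousMap.congr_fun this t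

open unitInterval in
theorem boundary_const (hp : IsGenCoveringMap p) {m : ℕ}
    (F : C((Fin (m + 2) → unitInterval), E))
    (hF : ∀ z ∈ Cube.boundary (Fin (m + 2)), p (F z) = p (F fun _ => 0)) :
    ∀ z ∈ Cube.boundary (Fin (m + 2)), F z = F fun _ => 0 := by
  intro z hz
  obtain ⟨i, hi⟩ := hz
  set w : Fin (m + 2) → unitInterval := fun j => if j = i then z i else 0 with hw
  have cont1 : Continuous fun t : unitInterval =>
      (fun j => if j = i then z i else σ t * z j : Fin (m + 2) → unitInterval) := by
    refine continuous_pi fun j => ?_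
    split_ifs
    · exact continuous_const
    · exact Continuous.subtype_mk
        ((continuous_subtype_val.comp unitInterval.continuous_symm).mul continuous_const) _
  have cont2 : Continuous fun t : unitInterval =>
      (fun j => if j = i then σ t * z i else 0 : Fin (m + 2) → unitInterval) := by
    refine continuous_pi fun j => ?_
    split_ifs
    · exact Continuous.subtype_mk
        ((continuous_subtype_val.comp unitInterval.continuous_symm).mul continuous_const) _
    · exact continuous_const
  set γ₁ : C(unitInterval, Fin (m + 2) → unitInterval) := ⟨_, cont1⟩ with hγ₁
  set γ₂ : C(unitInterval, Fin (m + 2) → unitInterval) := ⟨_, cont2⟩ with hγ₂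
  have hγ10 : γ₁ 0 = z := by
    funext j
    by_cases hj : j = i
    · simp [hγ₁, hj]
    · simp [hγ₁, hj]
  have hγ11 : γ₁ 1 = w := by
    funext j
    by_cases hj : j = i
    · simp [hγ₁, hw, hj]
    · simp [hγ₁, hw, hj]
  have hbd1 : ∀ t, γ₁ t ∈ Cube.boundary (Fin (m + 2)) := fun t => ⟨i, by simpa [hγ₁] using hi⟩
  obtain ⟨k, hk⟩ : ∃ k : Fin (m + 2), k ≠ i := by
    rcases eq_or_ne i 0 with h0 | h0
    · refine ⟨1, ?_⟩
      rw [h0]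
      intro hcon
      exact absurd (congrArg Fin.val hcon) (by simp)
    · exact ⟨0, Ne.symm h0⟩
  have hγ20 : γ₂ 0 = w := by
    funext j
    by_cases hj : j = i
    · simp [hγ₂, hw, hj]
    · simp [hγ₂, hw, hj]
  have hγ21 : γ₂ 1 = fun _ => 0 := by
    funext j
    by_cases hj : j = i
    · simp [hγ₂, hj]
    · simp [hγ₂, hj]
  have hbd2 : ∀ t, γ₂ t ∈ Cube.boundary (Fin (m + 2)) :=
    fun t => ⟨k, Or.inl (by simp [hγ₂, if_neg hk])⟩
  have step1 : F w = F z := by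
    have h1 : ∀ t, p ((F.comp γ₁) t) = p ((F.comp γ₁) 0) := by
      intro t
      simp only [ContinuousMap.comp_apply]
      rw [hF _ (hbd1 t), hF _ (hbd1 0)]
    have := const_path hp (F.comp γ₁) h1 1
    simpa [hγ10, hγ11] using this
  have step2 : F (fun _ => 0) = F w := by
    have h2 : ∀ t, p ((F.comp γ₂) t) = p ((F.comp γ₂) 0) := by
      intro t
      simp only [ContinuousMap.comp_apply]
      rw [hF _ (hbd2 t), hF _ (hbd2 0)]
    have := const_path hp (F.comp γ₂) h2 1
    simpa [hγ20, hγ21] using this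
  rw [step1.symm, step2.symm]

end GenCovAux


open GenCovAux in
/-- A generalized covering map induces an isomorphism on `π_n` for every `n ≥ 2`
(here `n + 2`), and an injection on `π_1`. -/
theorem genCoveringMap_pi_iso {E X : Type u} [TopologicalSpace E] [TopologicalSpace X]
    (p : C(E, X)) (hp : IsGenCoveringMap p) (e₀ : E) (x₀ : X) (he : p e₀ = x₀) :
    (∀ δ δ' : Path e₀ e₀,
      (δ.map p.continuous).Homotopic (δ'.map p.continuous) → δ.Homotopic δ') ∧
    ∀ n : ℕ, ∃ Φ : HomotopyGroup (Fin (n + 2)) E e₀ →* HomotopyGroup (Fin (n + 2)) X x₀,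
      (∀ f : GenLoop (Fin (n + 2)) E e₀,
        Φ ⟦f⟧ = ⟦(⟨p.comp f.1, fun y hy => by
            rw [ContinuousMap.comp_apply, f.2 y hy, he]⟩ :
          GenLoop (Fin (n + 2)) X x₀)⟧) ∧
      Function.Bijective Φ := by
  constructor
  · -- injectivity on π₁
    intro δ δ' hδ
    obtain ⟨H⟩ := hδ
    have h00 : (0 : unitInterval) ∈ ({0, 1} : Set unitInterval) := Set.mem_insert _ _
    have h11 : (1 : unitInterval) ∈ ({0, 1} : Set unitInterval) :=
      Set.mem_insert_iff.mpr (Or.inr rfl)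
    have hfy : H.toContinuousMap ((0 : unitInterval), (0 : unitInterval)) = p e₀ := by
      show H (0, 0) = p e₀
      rw [H.apply_zero]
      simp
    obtain ⟨G, hG, hGy⟩ := lift_exists hp ((0 : unitInterval), (0 : unitInterval))
      H.toContinuousMap e₀ hfy
    have hpg : ∀ ts : unitInterval × unitInterval, p (G ts) = H ts :=
      fun ts => ContinuousMap.congr_fun hG ts
    have claim1 : G.comp ((ContinuousMap.const unitInterval (0 : unitInterval)).prodMk
        (ContinuousMap.id unitInterval)) = δ.toContinuousMap := by
      refine lift_unique hp 0 _ _ (fun s => ?_) ?_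
      · show p (G (0, s)) = p (δ.toContinuousMap s)
        rw [hpg]
        have := H.apply_zero s
        simpa using this
      · show G (0, 0) = δ.toContinuousMap 0
        simpa using hGy
    have claim2 : ∀ t, G (t, 0) = e₀ := by
      intro t
      have hc := const_path hp (G.comp ((ContinuousMap.id unitInterval).prodMk
        (ContinuousMap.const unitInterval (0 : unitInterval)))) (fun s => ?_) t
      · show G (t, 0) = e₀
        calc G (t, 0) = G (0, 0) := hc
        _ = e₀ := hGy
      · show p (G (s, 0)) = p (G (0, 0))
        rw [hpg, hpg, H.eq_fst s h00, H.eq_fst 0 h00]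
    have claim3 : ∀ t, G (t, 1) = e₀ := by
      intro t
      have hc := const_path hp (G.comp ((ContinuousMap.id unitInterval).prodMk
        (ContinuousMap.const unitInterval (1 : unitInterval)))) (fun s => ?_) t
      · show G (t, 1) = e₀
        have h01 : G ((0 : unitInterval), (1 : unitInterval)) = e₀ := by
          have := ContinuousMap.congr_fun claim1 1
          simpa using this
        calc G (t, 1) = G (0, 1) := hc
        _ = e₀ := h01
      · show p (G (s, 1)) = p (G (0, 1))
        rw [hpg, hpg, H.eq_fst s h11, H.eq_fst 0 h11]
    have claim4 : G.comp ((ContinuousMap.const unitInterval (1 : unitInterval)).prodMk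
        (ContinuousMap.id unitInterval)) = δ'.toContinuousMap := by
      refine lift_unique hp 0 _ _ (fun s => ?_) ?_
      · show p (G (1, s)) = p (δ'.toContinuousMap s)
        rw [hpg]
        have := H.apply_one s
        simpa using this
      · show G (1, 0) = δ'.toContinuousMap 0
        simpa using claim2 1
    refine ⟨⟨⟨G, fun s => ContinuousMap.congr_fun claim1 s,
      fun s => ContinuousMap.congr_fun claim4 s⟩, fun t s hs => ?_⟩⟩
    rcases hs with hs | hs
    · subst hs
      show G (t, 0) = δ.toContinuousMap 0
      simpa using claim2 t
    · rcases hs with rfl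
      show G (t, 1) = δ.toContinuousMap 1
      simpa using claim3 t
  · -- isomorphism on πₙ, n ≥ 2
    intro n
    set y₀ : Fin (n + 2) → unitInterval := fun _ => 0 with hy₀def
    have hy₀ : y₀ ∈ Cube.boundary (Fin (n + 2)) := ⟨0, Or.inl rfl⟩
    let Fm : GenLoop (Fin (n + 2)) E e₀ → GenLoop (Fin (n + 2)) X x₀ := fun f =>
      ⟨p.comp f.1, fun y hy => by rw [ContinuousMap.comp_apply, f.2 y hy, he]⟩
    have hFm : ∀ f g : GenLoop (Fin (n + 2)) E e₀, f ≈ g → Fm f ≈ Fm g := by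
      intro f g h
      obtain ⟨K⟩ := h
      exact ⟨K.compContinuousMap p⟩
    let Φ₀ : HomotopyGroup (Fin (n + 2)) E e₀ → HomotopyGroup (Fin (n + 2)) X x₀ :=
      Quotient.map Fm hFm
    have hkey : ∀ (i : Fin (n + 2)) (a b : GenLoop (Fin (n + 2)) E e₀),
        Fm (GenLoop.transAt i a b) = GenLoop.transAt i (Fm a) (Fm b) := by
      intro i a b
      apply Subtype.ext
      ext y
      show p ((GenLoop.transAt i a b) y) = (GenLoop.transAt i (Fm a) (Fm b)) y
      simp only [GenLoop.transAt, GenLoop.coe_copy]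
      split_ifs <;> rfl
    have hmul : ∀ a b : HomotopyGroup (Fin (n + 2)) E e₀, Φ₀ (a * b) = Φ₀ a * Φ₀ b := by
      intro a b
      refine Quotient.inductionOn₂ a b fun f g => ?_
      exact (congrArg Φ₀ HomotopyGroup.mul_spec).trans
        ((congrArg (Quotient.mk _) (hkey 0 g f)).trans HomotopyGroup.mul_spec.symm)
    refine ⟨MonoidHom.mk' Φ₀ hmul, fun f => rfl, ?_, ?_⟩
    · -- injective
      intro a b
      refine Quotient.inductionOn₂ a b fun f g hfg => ?_
      obtain ⟨H⟩ := Quotient.exact hfg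
      have hfy : H.toContinuousMap ((0 : unitInterval), y₀) = p e₀ := by
        show H (0, y₀) = p e₀
        rw [H.apply_zero]
        show p (f.1 y₀) = p e₀
        rw [f.2 y₀ hy₀]
      obtain ⟨G, hG, hGy⟩ := lift_exists hp ((0 : unitInterval), y₀) H.toContinuousMap e₀ hfy
      have hpg : ∀ ts, p (G ts) = H ts := fun ts => ContinuousMap.congr_fun hG ts
      have claim0 : G.comp ((ContinuousMap.const (Fin (n + 2) → unitInterval)
          (0 : unitInterval)).prodMk (ContinuousMap.id _)) = f.1 := by
        refine lift_unique hp y₀ _ _ (fun z => ?_) ?_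
        · show p (G (0, z)) = p (f.1 z)
          rw [hpg]
          exact H.apply_zero z
        · show G (0, y₀) = f.1 y₀
          rw [hGy, f.2 y₀ hy₀]
      have claimbd : ∀ (t : unitInterval) (z), z ∈ Cube.boundary (Fin (n + 2)) →
          G (t, z) = e₀ := by
        intro t z hz
        have hc := const_path hp (G.comp ((ContinuousMap.id unitInterval).prodMk
          (ContinuousMap.const unitInterval z))) (fun s => ?_) t
        · show G (t, z) = e₀
          have h0z : G ((0 : unitInterval), z) = e₀ := by
            have := ContinuousMap.congr_fun claim0 z
            show G ((0 : unitInterval), z) = e₀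
            calc G ((0 : unitInterval), z) = f.1 z := this
            _ = e₀ := f.2 z hz
          calc G (t, z) = G (0, z) := hc
          _ = e₀ := h0z
        · show p (G (s, z)) = p (G (0, z))
          rw [hpg, hpg, H.eq_fst s hz, H.eq_fst 0 hz]
      have claim1 : G.comp ((ContinuousMap.const (Fin (n + 2) → unitInterval)
          (1 : unitInterval)).prodMk (ContinuousMap.id _)) = g.1 := by
        refine lift_unique hp y₀ _ _ (fun z => ?_) ?_
        · show p (G (1, z)) = p (g.1 z)
          rw [hpg]
          exact H.apply_one z
        · show G (1, y₀) = g.1 y₀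
          rw [claimbd 1 y₀ hy₀, g.2 y₀ hy₀]
      apply Quotient.sound
      exact ⟨⟨⟨G, fun z => ContinuousMap.congr_fun claim0 z,
        fun z => ContinuousMap.congr_fun claim1 z⟩,
        fun t z hz => (claimbd t z hz).trans (f.2 z hz).symm⟩⟩
    · -- surjective
      intro b
      refine Quotient.inductionOn b fun f => ?_
      have hfy : f.1 y₀ = p e₀ := by rw [f.2 y₀ hy₀, he]
      obtain ⟨Ft, hFt, hFty⟩ := lift_exists hp y₀ f.1 e₀ hfy
      have hbd : ∀ z ∈ Cube.boundary (Fin (n + 2)), Ft z = e₀ := by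
        intro z hz
        have hcond : ∀ z' ∈ Cube.boundary (Fin (n + 2)),
            p (Ft z') = p (Ft fun _ => 0) := by
          intro z' hz'
          have h1 : p (Ft z') = f.1 z' := ContinuousMap.congr_fun hFt z'
          have h2 : p (Ft fun _ => 0) = f.1 y₀ := ContinuousMap.congr_fun hFt y₀
          rw [h1, h2, f.2 z' hz', f.2 y₀ hy₀]
        have := boundary_const hp Ft hcond z hz
        rw [this]
        exact hFty
      refine ⟨⟦⟨Ft, hbd⟩⟧, ?_⟩
      show (⟦Fm ⟨Ft, hbd⟩⟧ : HomotopyGroup (Fin (n + 2)) X x₀) = ⟦f⟧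
      have : Fm ⟨Ft, hbd⟩ = f := Subtype.ext hFt
      rw [this]
end

section
/- Suppose p : Ỹ → Y is a generalized covering map, X ⊆ Y is a path-connected subspace containing the basepoint, and the inclusion X → Y induces a surjection on fundamental groups. Then the preimage p⁻¹(X) is path-connected. -/
open Set Topology

universe u

lemma homotopic_cast_of {Y : Type u} [TopologicalSpace Y] {a b : Y} (h : b = a) (γ : Path a a)
    (hγ : (Path.refl a).Homotopic γ) : (Path.refl b).Homotopic (γ.cast h h) := by
  subst h
  have : γ.cast rfl rfl = γ := by ext t; simp [Path.cast]
  rwa [this]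

lemma gen_lift_unique {E Y : Type u} [TopologicalSpace E] [TopologicalSpace Y]
    (p : C(E, Y)) (hp : IsGenCoveringMap p) (Z : Type u) [TopologicalSpace Z]
    [SimplyConnectedSpace Z] [LocallyPathConnectedSpace Z] (z : Z) (f : C(Z, Y)) (e : E)
    (hfe : f z = p e) : ∃! g : C(Z, E), p.comp g = f ∧ g z = e := by
  refine hp.2.2.2 Z z f e hfe (fun γ => ⟨Path.refl e, ?_⟩)
  have h0 : (Path.refl z).Homotopic γ := SimplyConnectedSpace.paths_homotopic _ _
  have h1 : (Path.refl (f z)).Homotopic (γ.map f.continuous) := by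
    have := h0.map f
    have hr : (Path.refl z).map f.continuous = Path.refl (f z) := by ext t; simp
    simpa [hr] using this
  have h2 : (Path.refl e).map p.continuous = Path.refl (p e) := by ext t; simp
  rw [h2]
  exact homotopic_cast_of hfe.symm _ h1

/-- If `p : Ỹ → Y` is a generalized covering map, `X ⊆ Y` a path-connected subspace containing
the basepoint, and the inclusion `X → Y` is `π₁`-surjective (every loop at `y₀` in `Y` is
path-homotopic to a loop contained in `X`), then `p⁻¹(X)` is path connected. -/
theorem genCovering_preimage_pathConnected {E Y : Type u} [TopologicalSpace E]
    [TopologicalSpace Y] (p : C(E, Y)) (hp : IsGenCoveringMap p)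
    (X : Set Y) (y₀ : Y) (hy₀ : y₀ ∈ X) (hXpc : IsPathConnected X)
    (e₀ : E) (he : p e₀ = y₀)
    (hsurj : ∀ γ : Path y₀ y₀, ∃ δ : Path y₀ y₀, Set.range ⇑δ ⊆ X ∧ δ.Homotopic γ) :
    IsPathConnected (⇑p ⁻¹' X) := by
  haveI := hp.2.1
  haveI : LocallyPathConnectedSpace (ULift.{u} ℝ) :=
    ((Homeomorph.ulift : ULift.{u} ℝ ≃ₜ ℝ)).isOpenEmbedding.locPathConnectedSpace
  haveI : ContractibleSpace (ULift.{u} ℝ) :=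
    ((Homeomorph.ulift : ULift.{u} ℝ ≃ₜ ℝ)).contractibleSpace
  haveI : LocallyPathConnectedSpace (ULift.{u} ℝ × ULift.{u} ℝ) :=
    (((Homeomorph.ulift : ULift.{u} ℝ ≃ₜ ℝ)).prodCongr ((Homeomorph.ulift : ULift.{u} ℝ ≃ₜ ℝ))).isOpenEmbedding.locPathConnectedSpace
  haveI : ContractibleSpace (ULift.{u} ℝ × ULift.{u} ℝ) :=
    (((Homeomorph.ulift : ULift.{u} ℝ ≃ₜ ℝ)).prodCongr ((Homeomorph.ulift : ULift.{u} ℝ ≃ₜ ℝ))).contractibleSpace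
  refine ⟨e₀, by simpa [he] using hy₀, ?_⟩
  intro e hpe
  replace hpe : p e ∈ X := hpe
  -- path in E from e₀ to e
  obtain ⟨σ⟩ : Joined e₀ e := PathConnectedSpace.joined e₀ e
  -- its projection, recast as a path from y₀
  set β₂ : Path y₀ (p e) := (σ.map p.continuous).cast he.symm rfl with hβ₂def
  -- a path from y₀ to p e inside X
  obtain ⟨α, hα⟩ : JoinedIn X y₀ (p e) := hXpc.joinedIn y₀ hy₀ (p e) hpe
  -- the loop β₂ * α⁻¹, replaced by a homotopic loop δ inside X
  obtain ⟨δ, hδX, hδ⟩ := hsurj (β₂.trans α.symm)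
  set β₁ : Path y₀ (p e) := δ.trans α with hβ₁def
  have hβ : β₁.Homotopic β₂ := by
    have h1 : β₁.Homotopic ((β₂.trans α.symm).trans α) := hδ.hcomp (Path.Homotopic.refl α)
    have h2 : ((β₂.trans α.symm).trans α).Homotopic (β₂.trans (α.symm.trans α)) :=
      ⟨Path.Homotopy.transAssoc _ _ _⟩
    have h3 : (β₂.trans (α.symm.trans α)).Homotopic (β₂.trans (Path.refl (p e))) :=
      (Path.Homotopic.refl β₂).hcomp ⟨(Path.Homotopy.reflSymmTrans α).symm⟩
    have h4 : (β₂.trans (Path.refl (p e))).Homotopic β₂ := ⟨Path.Homotopy.transRefl β₂⟩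
    exact ((h1.trans h2).trans h3).trans h4
  obtain ⟨F⟩ := hβ
  set pr : ℝ → unitInterval := Set.projIcc 0 1 zero_le_one with hprdef
  have hprc : Continuous pr := continuous_projIcc
  set Z := ULift.{u} ℝ with hZdef
  set f2 : C(Z × Z, Y) :=
    ⟨fun w => F (pr w.1.down, pr w.2.down),
      F.continuous.comp ((hprc.comp (continuous_uliftDown.comp continuous_fst)).prodMk
        (hprc.comp (continuous_uliftDown.comp continuous_snd)))⟩ with hf2def
  have hf2 : ∀ w : Z × Z, f2 w = F (pr w.1.down, pr w.2.down) := fun w => rfl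
  have hpr0 : pr 0 = 0 := Set.projIcc_left _
  have hpr1 : pr 1 = 1 := Set.projIcc_right _
  have hf2w₀ : f2 ((⟨0⟩, ⟨0⟩) : Z × Z) = p e₀ := by
    rw [hf2, hpr0, F.apply_zero]
    simp [he]
  obtain ⟨G, ⟨hG, hG0⟩, -⟩ :=
    gen_lift_unique p hp (Z × Z) ((⟨0⟩, ⟨0⟩) : Z × Z) f2 e₀ hf2w₀
  have hGp : ∀ w : Z × Z, p (G w) = f2 w := fun w => ContinuousMap.congr_fun hG w
  -- bottom edge: G (x, 0) = e₀
  have hbot : ∀ x : Z, G (x, (⟨0⟩ : Z)) = e₀ := by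
    set fb : C(Z, Y) := ⟨fun x => f2 (x, (⟨0⟩ : Z)),
      f2.continuous.comp (continuous_id.prodMk continuous_const)⟩ with hfbdef
    have hu := gen_lift_unique p hp Z ((⟨0⟩ : Z)) fb e₀ hf2w₀
    have h1 : p.comp ⟨fun x : Z => G (x, (⟨0⟩ : Z)),
        G.continuous.comp (continuous_id.prodMk continuous_const)⟩ = fb := by
      ext x; exact hGp (x, ⟨0⟩)
    have h2 : p.comp (ContinuousMap.const Z e₀) = fb := by
      ext x
      show p e₀ = f2 (x, (⟨0⟩ : Z))
      rw [hf2, hpr0, F.source (pr x.down), he]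
    have := (hu.unique ⟨h1, hG0⟩ ⟨h2, rfl⟩)
    intro x
    exact ContinuousMap.congr_fun this x
  -- right edge: G (1, s) = σ (pr s)
  have hright : ∀ s : Z, G ((⟨1⟩ : Z), s) = σ (pr s.down) := by
    set fr : C(Z, Y) := ⟨fun s => f2 ((⟨1⟩ : Z), s),
      f2.continuous.comp (continuous_const.prodMk continuous_id)⟩ with hfrdef
    have hbase : fr ((⟨0⟩ : Z)) = p e₀ := by
      show f2 ((⟨1⟩ : Z), (⟨0⟩ : Z)) = p e₀
      rw [hf2, hpr0, F.source, he]
    have hu := gen_lift_unique p hp Z ((⟨0⟩ : Z)) fr e₀ hbase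
    have h1 : p.comp ⟨fun s : Z => G ((⟨1⟩ : Z), s),
        G.continuous.comp (continuous_const.prodMk continuous_id)⟩ = fr := by
      ext s; exact hGp (⟨1⟩, s)
    have h2 : p.comp ⟨fun s : Z => σ (pr s.down),
        σ.continuous.comp (hprc.comp continuous_uliftDown)⟩ = fr := by
      ext s
      show p (σ (pr s.down)) = f2 ((⟨1⟩ : Z), s)
      rw [hf2, hpr1, F.apply_one]
      simp [hβ₂def, Path.cast]
    have h2base : σ (pr (0 : ℝ)) = e₀ := by rw [hpr0]; exact σ.source
    have := hu.unique ⟨h1, hbot ⟨1⟩⟩ ⟨h2, h2base⟩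
    intro s
    exact ContinuousMap.congr_fun this s
  -- top edge: G (x, 1) is constant
  have htop : G ((⟨0⟩ : Z), (⟨1⟩ : Z)) = G ((⟨1⟩ : Z), (⟨1⟩ : Z)) := by
    set ft : C(Z, Y) := ⟨fun x => f2 (x, (⟨1⟩ : Z)),
      f2.continuous.comp (continuous_id.prodMk continuous_const)⟩ with hftdef
    have hbase : ft ((⟨0⟩ : Z)) = p (G ((⟨0⟩ : Z), (⟨1⟩ : Z))) := (hGp (⟨0⟩, ⟨1⟩)).symm
    have hu := gen_lift_unique p hp Z ((⟨0⟩ : Z)) ft (G ((⟨0⟩ : Z), (⟨1⟩ : Z))) hbase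
    have h1 : p.comp ⟨fun x : Z => G (x, (⟨1⟩ : Z)),
        G.continuous.comp (continuous_id.prodMk continuous_const)⟩ = ft := by
      ext x; exact hGp (x, ⟨1⟩)
    have h2 : p.comp (ContinuousMap.const Z (G ((⟨0⟩ : Z), (⟨1⟩ : Z)))) = ft := by
      ext x
      show p (G ((⟨0⟩ : Z), (⟨1⟩ : Z))) = f2 (x, (⟨1⟩ : Z))
      rw [hGp (⟨0⟩, ⟨1⟩), hf2, hf2, hpr1, hpr0, F.target 0, F.target (pr x.down)]
    have := hu.unique ⟨h1, rfl⟩ ⟨h2, rfl⟩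
    exact (ContinuousMap.congr_fun this ⟨1⟩).symm
  have hend : G ((⟨0⟩ : Z), (⟨1⟩ : Z)) = e := by
    rw [htop, hright ⟨1⟩]
    show σ (pr 1) = e
    rw [hpr1]; exact σ.target
  -- the left edge is the desired path from e₀ to e
  refine ⟨⟨⟨fun t : unitInterval => G ((⟨0⟩ : Z), ⟨(t : ℝ)⟩),
      G.continuous.comp (continuous_const.prodMk
        (continuous_uliftUp.comp continuous_subtype_val))⟩, ?_, ?_⟩, ?_⟩
  · show G ((⟨0⟩ : Z), ⟨((0 : unitInterval) : ℝ)⟩) = e₀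
    simpa using hbot ⟨0⟩
  · show G ((⟨0⟩ : Z), ⟨((1 : unitInterval) : ℝ)⟩) = e
    simpa using hend
  · intro t
    show p (G ((⟨0⟩ : Z), ⟨(t : ℝ)⟩)) ∈ X
    rw [hGp, hf2, hpr0]
    have hprt : pr (t : ℝ) = t := Set.projIcc_val zero_le_one t
    rw [hprt, F.apply_zero]
    have : β₁ t ∈ Set.range ⇑β₁ := Set.mem_range_self t
    rw [hβ₁def, Path.trans_range] at this
    rcases this with h | h
    · exact hδX h
    · obtain ⟨u, hu⟩ := h
      exact hu ▸ hα u
end
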